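/- arXiv:cond-mat/0204055 — 5 statements merged into one kernel-verified Lean document; each statement's English description precedes it below -/
import Mathlib

section
/- Fortuin–Kasteleyn expansion: let G = (V, E) be a finite graph, K : E → ℝ a coupling function, and q ≥ 1 a natural number. Then Σ_{σ : V → {0,…,q−1}} Π_{ij ∈ E} exp(K(ij)·δ_{σ(i),σ(j)}) = Σ_{F ⊆ E} q^{c(F)} · Π_{ij ∈ F} (exp(K(ij)) − 1), where δ_{a,b} equals 1 if a = b and 0 otherwise, the outer sum on the right runs over all subsets F of E, and c(F) is the number of connected components of the spanning subgraph (V, F) (with the empty product equal to 1). -/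
open scoped Classical

noncomputable section

variable {V : Type*} [Fintype V] [DecidableEq V]

/-- The number of connected components of the spanning subgraph `(V, F)`. -/
def compCount (F : Finset (Sym2 V)) : ℕ :=
  Nat.card (SimpleGraph.fromEdgeSet (↑F : Set (Sym2 V))).ConnectedComponent

/-- Kronecker delta `δ_{σ(i), σ(j)}` for the unordered pair (edge) `e = ij`:
it equals `1` if `σ` takes the same value on the two endpoints of `e` and `0` otherwise. -/
def kron {q : ℕ} (σ : V → Fin q) (e : Sym2 V) : ℝ :=
  if ∀ i ∈ e, ∀ j ∈ e, σ i = σ j then 1 else 0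

lemma const_of_reachable {q : ℕ} (G' : SimpleGraph V) (σ : V → Fin q)
    (h : ∀ v w, G'.Adj v w → σ v = σ w) {v w : V} (hr : G'.Reachable v w) :
    σ v = σ w := by
  obtain ⟨p⟩ := hr
  induction p with
  | nil => rfl
  | cons ha _ ih => exact (h _ _ ha).trans ih

def constEquiv {q : ℕ} (G' : SimpleGraph V) :
    {σ : V → Fin q // ∀ v w, G'.Adj v w → σ v = σ w} ≃ (G'.ConnectedComponent → Fin q) where
  toFun s := SimpleGraph.ConnectedComponent.lift s.1
    (fun v w p _ => const_of_reachable G' s.1 s.2 ⟨p⟩)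
  invFun g := ⟨fun v => g (G'.connectedComponentMk v),
    fun v w h => congrArg g (SimpleGraph.ConnectedComponent.sound h.reachable)⟩
  left_inv s := Subtype.ext (funext fun v => rfl)
  right_inv g := funext (SimpleGraph.ConnectedComponent.ind fun v => rfl)

lemma sum_kron (F : Finset (Sym2 V)) (q : ℕ) :
    ∑ σ : V → Fin q, ∏ e ∈ F, kron σ e = (q : ℝ) ^ compCount F := by
  set G' := SimpleGraph.fromEdgeSet (↑F : Set (Sym2 V)) with hG'
  have h1 : ∀ σ : V → Fin q, ∏ e ∈ F, kron σ e =
      if ∀ v w, G'.Adj v w → σ v = σ w then (1 : ℝ) else 0 := by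
    intro σ
    unfold kron
    rw [Finset.prod_boole]
    congr 1
    simp only [eq_iff_iff]
    constructor
    · intro h v w hvw
      rw [hG', SimpleGraph.fromEdgeSet_adj] at hvw
      obtain ⟨he, hne⟩ := hvw
      exact h _ he v (Sym2.mem_mk_left v w) w (Sym2.mem_mk_right v w)
    · intro h e he i hi j hj
      by_cases hij : i = j
      · rw [hij]
      · apply h
        rw [hG', SimpleGraph.fromEdgeSet_adj]
        refine ⟨?_, hij⟩
        have : e = s(i, j) := ((Sym2.mem_and_mem_iff hij).mp ⟨hi, hj⟩)
        rwa [← this]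
  simp only [h1]
  rw [Finset.sum_boole]
  have hcard : (Finset.univ.filter fun σ : V → Fin q => ∀ v w, G'.Adj v w → σ v = σ w).card
      = Fintype.card (G'.ConnectedComponent → Fin q) := by
    rw [← Fintype.card_subtype]
    exact Fintype.card_congr (constEquiv G')
  rw [hcard]
  have : compCount F = Fintype.card G'.ConnectedComponent := by
    rw [compCount, Nat.card_eq_fintype_card]
  rw [this, Fintype.card_fun, Fintype.card_fin]
  push_cast
  ring

/-- Fortuin–Kasteleyn expansion: for a finite graph `G = (V, E)` with couplings
`K : E → ℝ` and `q ≥ 1`,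
`Σ_σ Π_{ij ∈ E} exp(K(ij) δ_{σ(i)σ(j)}) = Σ_{F ⊆ E} q^{c(F)} Π_{ij ∈ F} (exp(K(ij)) - 1)`. -/
theorem fortuin_kasteleyn (G : SimpleGraph V) [DecidableRel G.Adj]
    (K : Sym2 V → ℝ) (q : ℕ) (hq : 1 ≤ q) :
    ∑ σ : V → Fin q, ∏ e ∈ G.edgeFinset, Real.exp (K e * kron σ e) =
      ∑ F ∈ G.edgeFinset.powerset,
        (q : ℝ) ^ compCount F * ∏ e ∈ F, (Real.exp (K e) - 1) := by
  have hw : ∀ (σ : V → Fin q) (e : Sym2 V),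
      Real.exp (K e * kron σ e) = (Real.exp (K e) - 1) * kron σ e + 1 := by
    intro σ e
    unfold kron
    split
    · simp
    · simp
  calc ∑ σ : V → Fin q, ∏ e ∈ G.edgeFinset, Real.exp (K e * kron σ e)
      = ∑ σ : V → Fin q, ∏ e ∈ G.edgeFinset, ((Real.exp (K e) - 1) * kron σ e + 1) := by
        simp only [hw]
    _ = ∑ σ : V → Fin q, ∑ F ∈ G.edgeFinset.powerset,
          (∏ e ∈ F, (Real.exp (K e) - 1) * kron σ e) * ∏ e ∈ G.edgeFinset \ F, 1 := by
        simp only [Finset.prod_add]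
    _ = ∑ F ∈ G.edgeFinset.powerset, (∏ e ∈ F, (Real.exp (K e) - 1)) *
          ∑ σ : V → Fin q, ∏ e ∈ F, kron σ e := by
        rw [Finset.sum_comm]
        refine Finset.sum_congr rfl fun F _ => ?_
        rw [Finset.mul_sum]
        refine Finset.sum_congr rfl fun σ _ => ?_
        rw [Finset.prod_const_one, mul_one, Finset.prod_mul_distrib]
    _ = ∑ F ∈ G.edgeFinset.powerset,
          (q : ℝ) ^ compCount F * ∏ e ∈ F, (Real.exp (K e) - 1) := by
        refine Finset.sum_congr rfl fun F _ => ?_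
        rw [sum_kron, mul_comm]
end
end

section
/- Connectivity of minimizers: let G = (V, E) be a finite graph with edge weights w : E → ℝ, 0 ≤ w(e) for all e, let x ∈ V, let F' be a set of edges of G − x maximizing f_{G−x}, and let P_G(F') be the partition of V whose classes are the vertex sets of the connected components of (V∖{x}, F') together with {x}. Then any 𝒲 ⊆ P_G(F') containing {x} that minimizes |𝒲| − 1 − w(E(𝒲)) over subsets of P_G(F') containing {x} has the property that the union ∪_{X∈𝒲} X induces a connected subgraph of G. -/
open scoped Classical

noncomputable section

variable {V : Type*} [Fintype V] [DecidableEq V]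

/-- The number of connected components of the spanning subgraph on the vertex set `S`
determined by the edge set `A`. -/
def compCountOn (S : Set V) (A : Finset (Sym2 V)) : ℕ :=
  Nat.card ((SimpleGraph.fromEdgeSet (↑A : Set (Sym2 V))).induce S).ConnectedComponent

/-- `f_{G-x}(A)` : the Potts objective for the graph on the vertex set `S = V \ {x}`. -/
def pottsFunOn (S : Set V) (w : Sym2 V → ℝ) (A : Finset (Sym2 V)) : ℝ :=
  (compCountOn S A : ℝ) + ∑ e ∈ A, w e

/-- `E(𝒲)`: the set of edges of `G` joining vertices belonging to two different members
of the collection `𝒲` of vertex sets. -/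
def crossEdges (G : SimpleGraph V) [DecidableRel G.Adj] (𝒲 : Finset (Finset V)) :
    Finset (Sym2 V) :=
  G.edgeFinset.filter
    (fun e => ∃ X ∈ 𝒲, ∃ Y ∈ 𝒲, X ≠ Y ∧ ∃ i j, e = s(i, j) ∧ i ∈ X ∧ j ∈ Y)

/-- The partition of `V` into the vertex sets of the connected components of the
spanning graph `(V, A)`.  When the edges of `A` avoid `x`, this is exactly
`P_G(A)`: the components of `(V \ {x}, A)` together with the singleton `{x}`. -/
def compPartition (A : Finset (Sym2 V)) : Finset (Finset V) :=
  Finset.univ.image fun v : V =>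
    Finset.univ.filter fun u =>
      (SimpleGraph.fromEdgeSet (↑A : Set (Sym2 V))).Reachable u v

namespace PottsAux

open SimpleGraph

/-- Path confinement: if every edge of `H'` not in `H` has both endpoints in `D`, and the
`H`-component of `u` avoids `D`, then `H'`-reachability from `u` implies `H`-reachability. -/
lemma reach_confine {α : Type*} {H H' : SimpleGraph α} {D : Set α}
    (hD : ∀ a b, H'.Adj a b → H.Adj a b ∨ (a ∈ D ∧ b ∈ D)) :
    ∀ {u v : α}, H'.Walk u v → (∀ z, H.Reachable u z → z ∉ D) → H.Reachable u v := by
  intro u v p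
  induction p with
  | nil => exact fun _ => Reachable.refl _
  | @cons a b c hab p ih =>
      intro hu
      rcases hD a b hab with h1 | h2
      · exact h1.reachable.trans (ih (fun z hz => hu z (h1.reachable.trans hz)))
      · exact absurd h2.1 (hu a (Reachable.refl a))

/-- If a set `T` is closed under taking `H`-neighbours, then reachability in `H` between
points of `T` transfers to the induced graph on `T`. -/
lemma reach_induce {α : Type*} {H : SimpleGraph α} {T : Set α}
    (hcl : ∀ a b, H.Adj a b → a ∈ T → b ∈ T) :
    ∀ {u v : α}, H.Walk u v → ∀ (hu : u ∈ T) (hv : v ∈ T),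
      (H.induce T).Reachable ⟨u, hu⟩ ⟨v, hv⟩ := by
  intro u v p
  induction p with
  | nil => intro hu hv; exact Reachable.refl _
  | @cons a b c hab p ih =>
      intro hu hv
      have hb : b ∈ T := hcl _ _ hab hu
      have hadj : (H.induce T).Adj ⟨a, hu⟩ ⟨b, hb⟩ := by
        simp only [comap_adj, Function.Embedding.coe_subtype]
        exact hab
      exact hadj.reachable.trans (ih hb hv)

/-- Monotone transfer of reachability along a closed set. -/
lemma reach_mono_on {α : Type*} {H K : SimpleGraph α} {T : Set α}
    (h : ∀ a b, H.Adj a b → a ∈ T → b ∈ T ∧ K.Adj a b) :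
    ∀ {u v : α}, H.Walk u v → u ∈ T → K.Reachable u v := by
  intro u v p
  induction p with
  | nil => exact fun _ => Reachable.refl _
  | @cons a b c hab p ih =>
      intro ha
      obtain ⟨hb, hk⟩ := h a b hab ha
      exact hk.reachable.trans (ih hb)

/-- Key counting lemma: if every edge of `H'` not in `H` has both endpoints in a nonempty set
`D`, then the number of components of `H` exceeds that of `H'` by less than the number of
`H`-components meeting `D`. -/
lemma card_cc_le {α : Type*} [Finite α] {H H' : SimpleGraph α} (hle : H ≤ H')
    {D : Set α} (hD : ∀ a b, H'.Adj a b → H.Adj a b ∨ (a ∈ D ∧ b ∈ D))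
    {d₀ : α} (hd₀ : d₀ ∈ D) :
    Nat.card H.ConnectedComponent + 1 ≤
      Nat.card H'.ConnectedComponent +
        Nat.card {c : H.ConnectedComponent // ∃ v ∈ D, H.connectedComponentMk v = c} := by
  classical
  set P : H.ConnectedComponent → Prop := fun c => ∃ v ∈ D, H.connectedComponentMk v = c with hP
  set m₀ : H.ConnectedComponent := H.connectedComponentMk d₀ with hm₀
  have hconf : ∀ (u u' : α), (¬ P (H.connectedComponentMk u)) →
      H'.Reachable u u' → H.Reachable u u' := by
    intro u u' hnp hr
    obtain ⟨p⟩ := hr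
    refine reach_confine hD p ?_
    intro z hz hzD
    exact hnp ⟨z, hzD, (ConnectedComponent.sound hz).symm⟩
  have key : ∀ c c' : H.ConnectedComponent,
      ¬ (P c ∧ c ≠ m₀) → ¬ (P c' ∧ c' ≠ m₀) →
      c.map (Hom.ofLE hle) = c'.map (Hom.ofLE hle) →
      c = c' := by
    refine ConnectedComponent.ind₂ ?_
    intro u u' h1 h2 hmap
    simp only [ConnectedComponent.map_mk, Hom.ofLE_apply,
      ConnectedComponent.eq] at hmap
    rw [not_and_or, not_not] at h1 h2
    rcases h1 with h1 | h1
    · exact ConnectedComponent.sound (hconf _ _ h1 hmap)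
    · rcases h2 with h2 | h2
      · exact (ConnectedComponent.sound (hconf _ _ h2 hmap.symm)).symm
      · rw [h1, h2]
  set F : H.ConnectedComponent →
      H'.ConnectedComponent ⊕ {c : H.ConnectedComponent // P c ∧ c ≠ m₀} := fun c =>
    if h : P c ∧ c ≠ m₀ then Sum.inr ⟨c, h⟩
    else Sum.inl (c.map (Hom.ofLE hle)) with hF
  have hFinj : Function.Injective F := by
    intro c c' hcc
    by_cases h1 : P c ∧ c ≠ m₀ <;> by_cases h2 : P c' ∧ c' ≠ m₀
    · rw [hF] at hcc; simp only [dif_pos h1, dif_pos h2] at hcc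
      exact congrArg Subtype.val (Sum.inr.inj hcc)
    · rw [hF] at hcc; simp only [dif_pos h1, dif_neg h2] at hcc
      exact absurd hcc (by simp)
    · rw [hF] at hcc; simp only [dif_pos h2, dif_neg h1] at hcc
      exact absurd hcc (by simp)
    · rw [hF] at hcc; simp only [dif_neg h1, dif_neg h2] at hcc
      exact key c c' h1 h2 (Sum.inl.inj hcc)
  have hG : Function.Injective
      (fun a : {c : H.ConnectedComponent // P c ∧ c ≠ m₀} ⊕ Unit =>
        (Sum.elim (fun b => (⟨b.1, b.2.1⟩ : {c // P c}))
          (fun _ => (⟨m₀, ⟨d₀, hd₀, rfl⟩⟩ : {c // P c})) a)) := by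
    rintro (a | a) (b | b) hab <;> simp only [Sum.elim_inl, Sum.elim_inr] at hab
    · injection hab with h'; exact congrArg Sum.inl (Subtype.ext h')
    · injection hab with h'; exact absurd h' a.2.2
    · injection hab with h'; exact absurd h'.symm b.2.2
    · rfl
  have h1 : Nat.card H.ConnectedComponent ≤
      Nat.card H'.ConnectedComponent + Nat.card {c : H.ConnectedComponent // P c ∧ c ≠ m₀} := by
    have := Nat.card_le_card_of_injective F hFinj
    rwa [Nat.card_sum] at this
  have h2 : Nat.card {c : H.ConnectedComponent // P c ∧ c ≠ m₀} + 1 ≤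
      Nat.card {c : H.ConnectedComponent // P c} := by
    have := Nat.card_le_card_of_injective _ hG
    simpa [Nat.card_sum] using this
  show Nat.card H.ConnectedComponent + 1 ≤
      Nat.card H'.ConnectedComponent + Nat.card {c : H.ConnectedComponent // P c}
  omega

end PottsAux

open SimpleGraph in
/-- The `A`-component class of a vertex `v`. -/
def classOf (A : Finset (Sym2 V)) (v : V) : Finset V :=
  Finset.univ.filter fun u => (SimpleGraph.fromEdgeSet (↑A : Set (Sym2 V))).Reachable u v

lemma mem_classOf {A : Finset (Sym2 V)} {u v : V} :
    u ∈ classOf A v ↔ (SimpleGraph.fromEdgeSet (↑A : Set (Sym2 V))).Reachable u v := by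
  simp [classOf]

lemma self_mem_classOf (A : Finset (Sym2 V)) (v : V) : v ∈ classOf A v :=
  mem_classOf.2 (SimpleGraph.Reachable.refl _)

lemma classOf_eq_of_mem {A : Finset (Sym2 V)} {u v : V} (h : u ∈ classOf A v) :
    classOf A u = classOf A v := by
  rw [mem_classOf] at h
  ext z
  simp only [mem_classOf]
  exact ⟨fun hz => hz.trans h, fun hz => hz.trans h.symm⟩

lemma mem_compPartition {A : Finset (Sym2 V)} {X : Finset V} :
    X ∈ compPartition A ↔ ∃ v, X = classOf A v := by
  simp only [compPartition, Finset.mem_image, Finset.mem_univ, true_and, classOf]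
  exact ⟨fun ⟨v, h⟩ => ⟨v, h.symm⟩, fun ⟨v, h⟩ => ⟨v, h.symm⟩⟩

lemma compPartition_eq_of_mem_mem {A : Finset (Sym2 V)} {X Y : Finset V}
    (hX : X ∈ compPartition A) (hY : Y ∈ compPartition A) {a : V}
    (haX : a ∈ X) (haY : a ∈ Y) : X = Y := by
  obtain ⟨v, rfl⟩ := mem_compPartition.1 hX
  obtain ⟨u, rfl⟩ := mem_compPartition.1 hY
  rw [← classOf_eq_of_mem haX, ← classOf_eq_of_mem haY]

/-- Connectivity of minimizers: let `G = (V, E)` have nonnegative edge weights,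
`x ∈ V`, let `F'` be a set of edges of `G - x` maximizing `f_{G-x}`, and let
`P_G(F')` be the partition of `V` formed by the connected components of
`(V \ {x}, F')` together with `{x}`.  Then any `𝒲 ⊆ P_G(F')` containing `{x}` which
minimizes `|𝒲| - 1 - w(E(𝒲))` over subsets of `P_G(F')` containing `{x}` is such that
the union `∪_{X ∈ 𝒲} X` induces a connected subgraph of `G`. -/
theorem minimizer_union_connected (G : SimpleGraph V) [DecidableRel G.Adj]
    (w : Sym2 V → ℝ) (hw : ∀ e, 0 ≤ w e) (x : V)
    (F' : Finset (Sym2 V)) (hF' : F' ⊆ G.edgeFinset.filter (fun e => x ∉ e))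
    (hopt : ∀ A ⊆ G.edgeFinset.filter (fun e => x ∉ e),
      pottsFunOn {v : V | v ≠ x} w A ≤ pottsFunOn {v : V | v ≠ x} w F')
    (𝒲 : Finset (Finset V)) (h𝒲 : 𝒲 ⊆ compPartition F')
    (hx𝒲 : ({x} : Finset V) ∈ 𝒲)
    (hmin : ∀ 𝒲' ⊆ compPartition F', ({x} : Finset V) ∈ 𝒲' →
      (𝒲.card : ℝ) - 1 - ∑ e ∈ crossEdges G 𝒲, w e ≤
        (𝒲'.card : ℝ) - 1 - ∑ e ∈ crossEdges G 𝒲', w e) :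
    (G.induce (↑(𝒲.sup id) : Set V)).Connected := by
  classical
  open SimpleGraph in
  set S : Set V := {v : V | v ≠ x} with hS
  set H0 : SimpleGraph V := SimpleGraph.fromEdgeSet (↑F' : Set (Sym2 V)) with hH0
  set U : Finset V := 𝒲.sup id with hU
  have hxU : x ∈ U := Finset.mem_sup.2 ⟨{x}, hx𝒲, Finset.mem_singleton_self x⟩
  -- basic facts about H0
  have hH0G : ∀ a b : V, H0.Adj a b → G.Adj a b := by
    intro a b hab
    rw [hH0, SimpleGraph.fromEdgeSet_adj] at hab
    have h1 := hF' (Finset.mem_coe.1 hab.1)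
    rw [Finset.mem_filter, SimpleGraph.mem_edgeFinset, SimpleGraph.mem_edgeSet] at h1
    exact h1.1
  have hxnotadj : ∀ u, ¬ H0.Adj x u := by
    intro u hu
    rw [hH0, SimpleGraph.fromEdgeSet_adj] at hu
    have h1 := hF' (Finset.mem_coe.1 hu.1)
    rw [Finset.mem_filter] at h1
    exact h1.2 (Sym2.mem_mk_left x u)
  have hreach_x : ∀ u, H0.Reachable u x → u = x := by
    intro u h
    obtain ⟨p⟩ := h.symm
    cases p with
    | nil => rfl
    | cons h' _ => exact absurd h' (hxnotadj _)
  -- the restricted graph on U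
  set GU : SimpleGraph V :=
    { Adj := fun a b => G.Adj a b ∧ a ∈ U ∧ b ∈ U
      symm := ⟨fun a b h => ⟨h.1.symm, h.2.2, h.2.1⟩⟩
      loopless := ⟨fun a h => G.loopless.irrefl a h.1⟩ } with hGU
  have hGUadj : ∀ a b : V, GU.Adj a b ↔ (G.Adj a b ∧ a ∈ U ∧ b ∈ U) := fun a b => Iff.rfl
  -- sufficiency of GU-reachability to x
  have key : (∀ u ∈ U, GU.Reachable u x) → (G.induce (↑U : Set V)).Connected := by
    intro hall
    rw [SimpleGraph.connected_iff]
    refine ⟨?_, ⟨⟨x, by exact_mod_cast hxU⟩⟩⟩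
    rintro ⟨a, ha⟩ ⟨b, hb⟩
    have h1 : GU.Reachable a b :=
      (hall a (by exact_mod_cast ha)).trans (hall b (by exact_mod_cast hb)).symm
    obtain ⟨p⟩ := h1
    have h2 := PottsAux.reach_induce (H := GU) (T := (↑U : Set V))
      (fun a b hab _ => hab.2.2) p ha hb
    exact h2.map (SimpleGraph.Hom.ofLE (by intro a b hab; exact hab.1))
  by_contra hcon
  have hex : ∃ u ∈ U, ¬ GU.Reachable u x := by
    by_contra h
    push_neg at h
    exact hcon (key h)
  obtain ⟨u₀, hu₀U, hu₀⟩ := hex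
  -- class facts
  have class_subset_U : ∀ X ∈ 𝒲, X ⊆ U := fun X hX => Finset.le_sup (f := id) hX
  have class_form : ∀ X ∈ compPartition F', ∀ u ∈ X, X = classOf F' u := by
    intro X hX u hu
    obtain ⟨v, rfl⟩ := mem_compPartition.1 hX
    exact (classOf_eq_of_mem hu).symm
  have reach_GU : ∀ X ∈ 𝒲, ∀ u ∈ X, ∀ v ∈ X, GU.Reachable u v := by
    intro X hX u hu v hv
    have hXu : X = classOf F' u := class_form X (h𝒲 hX) u hu
    have h1 : H0.Reachable u v := by
      have h2 : v ∈ classOf F' u := hXu ▸ hv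
      exact (mem_classOf.1 h2).symm
    obtain ⟨p⟩ := h1
    refine PottsAux.reach_mono_on (H := H0) (K := GU) (T := (↑X : Set V)) ?_ p ?_
    · intro a b hab ha
      have haX : a ∈ X := Finset.mem_coe.1 ha
      have hXa : X = classOf F' a := class_form X (h𝒲 hX) a haX
      have hbX : b ∈ X := by
        rw [hXa]
        exact mem_classOf.2 hab.symm.reachable
      exact ⟨Finset.mem_coe.2 hbX,
        ⟨hH0G a b hab, class_subset_U X hX haX, class_subset_U X hX hbX⟩⟩
    · exact Finset.mem_coe.2 hu
  -- the partition into reachable / unreachable classes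
  set Pp : Finset V → Prop := fun X => ∃ u ∈ X, GU.Reachable u x with hPp
  set 𝒲₁ : Finset (Finset V) := 𝒲.filter Pp with h𝒲₁
  set 𝒲₂ : Finset (Finset V) := 𝒲.filter (fun X => ¬ Pp X) with h𝒲₂
  have hP_all : ∀ X ∈ 𝒲, Pp X → ∀ u ∈ X, GU.Reachable u x := by
    rintro X hX ⟨u', hu', hr⟩ u hu
    exact (reach_GU X hX u hu u' hu').trans hr
  have hW2x : ∀ X ∈ 𝒲₂, x ∉ X := by
    intro X hX hxX
    exact (Finset.mem_filter.1 hX).2 ⟨x, hxX, SimpleGraph.Reachable.refl x⟩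
  have hu₀x : u₀ ≠ x := by
    intro h
    exact hu₀ (by rw [h])
  obtain ⟨X₀, hX₀𝒲, hu₀X₀⟩ := Finset.mem_sup.1 hu₀U
  have hX₀2 : X₀ ∈ 𝒲₂ :=
    Finset.mem_filter.2 ⟨hX₀𝒲, fun hp => hu₀ (hP_all X₀ hX₀𝒲 hp u₀ hu₀X₀)⟩
  -- the cross edges within 𝒲₂ avoid x
  have hE2sub : crossEdges G 𝒲₂ ⊆ G.edgeFinset.filter (fun e => x ∉ e) := by
    intro e he
    rw [crossEdges, Finset.mem_filter] at he
    obtain ⟨heG, X, hX, Y, hY, hXY, i, j, heq, hi, hj⟩ := he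
    refine Finset.mem_filter.2 ⟨heG, ?_⟩
    intro hxe
    rw [heq, Sym2.mem_iff] at hxe
    rcases hxe with rfl | rfl
    · exact hW2x X hX hi
    · exact hW2x Y hY hj
  -- F' is disjoint from the 𝒲₂-cross edges
  have hdisjF'E2 : Disjoint F' (crossEdges G 𝒲₂) := by
    rw [Finset.disjoint_left]
    intro e heF heE
    rw [crossEdges, Finset.mem_filter] at heE
    obtain ⟨-, X, hX, Y, hY, hXY, i, j, heq, hi, hj⟩ := heE
    have hXp : X ∈ compPartition F' := h𝒲 (Finset.mem_of_mem_filter _ hX)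
    have hYp : Y ∈ compPartition F' := h𝒲 (Finset.mem_of_mem_filter _ hY)
    have hij : i ≠ j := by
      rintro rfl
      exact hXY (compPartition_eq_of_mem_mem hXp hYp hi hj)
    have hadj : H0.Adj i j := by
      rw [hH0, SimpleGraph.fromEdgeSet_adj]
      exact ⟨Finset.mem_coe.2 (heq ▸ heF), hij⟩
    refine hXY ?_
    rw [class_form X hXp i hi, class_form Y hYp j hj]
    exact classOf_eq_of_mem (mem_classOf.2 hadj.reachable)
  -- no G-edges join 𝒲₁ and 𝒲₂, hence the cross edges split
  have hprop : ∀ X ∈ 𝒲, ∀ Y ∈ 𝒲, ∀ i ∈ X, ∀ j ∈ Y, G.Adj i j → Pp X → Pp Y := by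
    intro X hX Y hY i hi j hj hadj hp
    have h1 : GU.Reachable i x := hP_all X hX hp i hi
    have h2 : GU.Adj j i := ⟨hadj.symm, class_subset_U Y hY hj, class_subset_U X hX hi⟩
    exact ⟨j, hj, h2.reachable.trans h1⟩
  have hsplit : crossEdges G 𝒲 = crossEdges G 𝒲₁ ∪ crossEdges G 𝒲₂ := by
    ext e
    simp only [crossEdges, Finset.mem_filter, Finset.mem_union]
    constructor
    · rintro ⟨heG, X, hX, Y, hY, hXY, i, j, heq, hi, hj⟩
      have hadj : G.Adj i j := by
        rw [← SimpleGraph.mem_edgeSet, ← heq]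
        exact SimpleGraph.mem_edgeFinset.1 heG
      by_cases hp : Pp X
      · exact Or.inl ⟨heG, X, Finset.mem_filter.2 ⟨hX, hp⟩, Y,
          Finset.mem_filter.2 ⟨hY, hprop X hX Y hY i hi j hj hadj hp⟩,
          hXY, i, j, heq, hi, hj⟩
      · have hpY : ¬ Pp Y := fun hpy => hp (hprop Y hY X hX j hj i hi hadj.symm hpy)
        exact Or.inr ⟨heG, X, Finset.mem_filter.2 ⟨hX, hp⟩, Y,
          Finset.mem_filter.2 ⟨hY, hpY⟩, hXY, i, j, heq, hi, hj⟩
    · rintro (⟨heG, X, hX, Y, hY, hXY, i, j, heq, hi, hj⟩ |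
        ⟨heG, X, hX, Y, hY, hXY, i, j, heq, hi, hj⟩) <;>
      exact ⟨heG, X, Finset.mem_of_mem_filter _ hX, Y, Finset.mem_of_mem_filter _ hY,
        hXY, i, j, heq, hi, hj⟩
  have hdisj12 : Disjoint (crossEdges G 𝒲₁) (crossEdges G 𝒲₂) := by
    rw [Finset.disjoint_left]
    intro e h1 h2
    rw [crossEdges, Finset.mem_filter] at h1 h2
    obtain ⟨-, X, hX, Y, hY, hXY, i, j, heq, hi, hj⟩ := h1
    obtain ⟨-, X', hX', Y', hY', hXY', i', j', heq', hi', hj'⟩ := h2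
    rw [heq] at heq'
    have hiZ : ∃ Z ∈ 𝒲₂, i ∈ Z := by
      rcases Sym2.eq_iff.1 heq' with ⟨h1', h2'⟩ | ⟨h1', h2'⟩
      · exact ⟨X', hX', by rw [h1']; exact hi'⟩
      · exact ⟨Y', hY', by rw [h1']; exact hj'⟩
    obtain ⟨Z, hZ, hiZ⟩ := hiZ
    have hPX : Pp X := (Finset.mem_filter.1 hX).2
    have hnPZ : ¬ Pp Z := (Finset.mem_filter.1 hZ).2
    have hXZ : X ≠ Z := fun h => hnPZ (h ▸ hPX)
    exact hXZ (compPartition_eq_of_mem_mem (h𝒲 (Finset.mem_of_mem_filter _ hX))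
      (h𝒲 (Finset.mem_of_mem_filter _ hZ)) hi hiZ)
  -- the minimality step
  have hcard12 : 𝒲₁.card + 𝒲₂.card = 𝒲.card :=
    Finset.card_filter_add_card_filter_not (p := Pp)
  have hq1 := hmin 𝒲₁ ((Finset.filter_subset _ _).trans h𝒲)
    (Finset.mem_filter.2 ⟨hx𝒲, ⟨x, Finset.mem_singleton_self x, SimpleGraph.Reachable.refl x⟩⟩)
  have hsum : ∑ e ∈ crossEdges G 𝒲, w e =
      ∑ e ∈ crossEdges G 𝒲₁, w e + ∑ e ∈ crossEdges G 𝒲₂, w e := by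
    rw [hsplit, Finset.sum_union hdisj12]
  have hq2 : (𝒲₂.card : ℝ) ≤ ∑ e ∈ crossEdges G 𝒲₂, w e := by
    have hc : (𝒲.card : ℝ) = (𝒲₁.card : ℝ) + (𝒲₂.card : ℝ) := by exact_mod_cast hcard12.symm
    rw [hsum, hc] at hq1
    linarith
  -- the optimality step
  have hq3 := hopt (F' ∪ crossEdges G 𝒲₂) (Finset.union_subset hF' hE2sub)
  rw [pottsFunOn, pottsFunOn, Finset.sum_union hdisjF'E2] at hq3
  -- the component-counting step
  set Hi : SimpleGraph ↥S := (SimpleGraph.fromEdgeSet (↑F' : Set (Sym2 V))).induce S with hHi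
  set Hi' : SimpleGraph ↥S :=
    (SimpleGraph.fromEdgeSet (↑(F' ∪ crossEdges G 𝒲₂) : Set (Sym2 V))).induce S with hHi'
  have hle : Hi ≤ Hi' := by
    intro a b hab
    simp only [hHi, SimpleGraph.comap_adj, Function.Embedding.coe_subtype,
      SimpleGraph.fromEdgeSet_adj, Finset.mem_coe] at hab
    simp only [hHi', SimpleGraph.comap_adj, Function.Embedding.coe_subtype,
      SimpleGraph.fromEdgeSet_adj, Finset.mem_coe, Finset.mem_union]
    exact ⟨Or.inl hab.1, hab.2⟩
  set D : Set ↥S := {a : ↥S | ∃ X ∈ 𝒲₂, ↑a ∈ X} with hD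
  have hDcond : ∀ a b : ↥S, Hi'.Adj a b → Hi.Adj a b ∨ (a ∈ D ∧ b ∈ D) := by
    intro a b hab
    simp only [hHi', SimpleGraph.comap_adj, Function.Embedding.coe_subtype,
      SimpleGraph.fromEdgeSet_adj, Finset.mem_coe, Finset.mem_union] at hab
    rcases hab.1 with h | h
    · left
      simp only [hHi, SimpleGraph.comap_adj, Function.Embedding.coe_subtype,
        SimpleGraph.fromEdgeSet_adj, Finset.mem_coe]
      exact ⟨h, hab.2⟩
    · right
      rw [crossEdges, Finset.mem_filter] at h
      obtain ⟨-, X, hX, Y, hY, hXY, i, j, heq, hi, hj⟩ := h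
      rcases Sym2.eq_iff.1 heq with ⟨h1', h2'⟩ | ⟨h1', h2'⟩
      · exact ⟨⟨X, hX, by rw [h1']; exact hi⟩, ⟨Y, hY, by rw [h2']; exact hj⟩⟩
      · exact ⟨⟨Y, hY, by rw [h1']; exact hj⟩, ⟨X, hX, by rw [h2']; exact hi⟩⟩
  have hd₀mem : (⟨u₀, hu₀x⟩ : ↥S) ∈ D := ⟨X₀, hX₀2, hu₀X₀⟩
  have hcount := PottsAux.card_cc_le hle hDcond hd₀mem
  -- components meeting D inject into 𝒲₂
  have hSclosed : ∀ p q : V, H0.Adj p q → p ∈ S → q ∈ S := by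
    intro p q hpq _
    intro hq
    subst hq
    exact hxnotadj p hpq.symm
  have hvalhom : ∀ {a b : ↥S}, Hi.Adj a b → H0.Adj ↑a ↑b := by
    intro a b hab
    simpa only [hHi, SimpleGraph.comap_adj, Function.Embedding.coe_subtype] using hab
  have hf0 : ∀ (a b : ↥S) (p : Hi.Walk a b), p.IsPath → classOf F' ↑a = classOf F' ↑b := by
    intro a b p _
    have h1 : H0.Reachable ↑a ↑b :=
      p.reachable.map (⟨Subtype.val, fun h => hvalhom h⟩ : Hi →g H0)
    exact classOf_eq_of_mem (mem_classOf.2 h1)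
  set m : Hi.ConnectedComponent → Finset V :=
    SimpleGraph.ConnectedComponent.lift (fun a : ↥S => classOf F' ↑a) hf0 with hm
  have hm_inj : ∀ c c', m c = m c' → c = c' := by
    refine SimpleGraph.ConnectedComponent.ind₂ ?_
    intro a b h
    have h' : classOf F' (↑a : V) = classOf F' (↑b : V) := h
    have hr : H0.Reachable ↑a ↑b := mem_classOf.1 (h' ▸ self_mem_classOf F' (↑a : V))
    obtain ⟨p⟩ := hr
    have h2 := PottsAux.reach_induce hSclosed p a.2 b.2
    exact SimpleGraph.ConnectedComponent.sound h2
  have hn : Nat.card {c : Hi.ConnectedComponent // ∃ v ∈ D, Hi.connectedComponentMk v = c} ≤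
      𝒲₂.card := by
    have hmem : ∀ c : {c : Hi.ConnectedComponent // ∃ v ∈ D, Hi.connectedComponentMk v = c},
        m c.1 ∈ 𝒲₂ := by
      rintro ⟨c, v, ⟨X, hX2, hvX⟩, hvc⟩
      have hX𝒲 : X ∈ compPartition F' := h𝒲 (Finset.mem_of_mem_filter _ hX2)
      have hXv : X = classOf F' ↑v := class_form X hX𝒲 ↑v hvX
      subst hvc
      show classOf F' (↑v : V) ∈ 𝒲₂
      rw [← hXv]
      exact hX2
    have hinj : Function.Injective
        (fun c : {c : Hi.ConnectedComponent // ∃ v ∈ D, Hi.connectedComponentMk v = c} =>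
          (⟨m c.1, hmem c⟩ : {X : Finset V // X ∈ 𝒲₂})) := by
      intro c c' h
      exact Subtype.ext (hm_inj _ _ (congrArg Subtype.val h))
    have := Nat.card_le_card_of_injective _ hinj
    rwa [Nat.card_eq_finsetCard] at this
  -- put everything together
  have hcc1 : compCountOn S F' = Nat.card Hi.ConnectedComponent := rfl
  have hcc2 : compCountOn S (F' ∪ crossEdges G 𝒲₂) = Nat.card Hi'.ConnectedComponent := rfl
  have hfinal : (compCountOn S F' : ℝ) + 1 ≤
      (compCountOn S (F' ∪ crossEdges G 𝒲₂) : ℝ) + (𝒲₂.card : ℝ) := by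
    rw [hcc1, hcc2]
    exact_mod_cast le_trans hcount (by omega : Nat.card Hi'.ConnectedComponent +
      Nat.card {c : Hi.ConnectedComponent // ∃ v ∈ D, Hi.connectedComponentMk v = c} ≤
      Nat.card Hi'.ConnectedComponent + 𝒲₂.card)
  linarith
end
end

section
/- CUT identity: let H = (V, E) be a finite graph with nonnegative edge weights w : E → ℝ≥0. For u ∈ V set p(u) = (1/2)·Σ_{v : uv∈E} w(uv), and let K = Σ_{u∈V} max(p(u) − 1, 0). Then for every W ⊆ V: Σ_{u∉W} max(p(u) − 1, 0) + Σ_{u∈W} max(1 − p(u), 0) + (1/2)·Σ_{uv∈E, u∈W, v∉W} w(uv) = |W| − w(W) + K, where w(W) is the total weight of the edges with both endpoints in W. (The left-hand side is the capacity of the cut δ({s}∪W) in the network N(H,w).) -/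
open scoped Classical

noncomputable section

variable {V : Type*} [Fintype V] [DecidableEq V]

/-- `p(u) = (1/2) Σ_{v : uv ∈ E} w(uv)` : half the total weight of the edges
incident to `u`. -/
def halfDeg (G : SimpleGraph V) [DecidableRel G.Adj] (w : Sym2 V → ℝ) (u : V) : ℝ :=
  (1 / 2) * ∑ v ∈ G.neighborFinset u, w s(u, v)

/-- `w(W)` : the total weight of the edges of the graph having both endpoints in `W`. -/
def inWeight (G : SimpleGraph V) [DecidableRel G.Adj] (w : Sym2 V → ℝ)
    (W : Finset V) : ℝ :=
  ∑ e ∈ G.edgeFinset.filter (fun e => ∀ v ∈ e, v ∈ W), w e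

lemma sum_dart_fst (G : SimpleGraph V) [DecidableRel G.Adj] (f : V → V → ℝ) :
    ∑ d : G.Dart, f d.fst d.snd = ∑ u : V, ∑ v ∈ G.neighborFinset u, f u v := by
  rw [← Finset.sum_fiberwise_of_maps_to (g := fun d : G.Dart => d.fst)
      (fun d _ => Finset.mem_univ _)]
  refine Finset.sum_congr rfl fun u _ => ?_
  rw [show (Finset.univ.filter fun d : G.Dart => d.fst = u)
      = Finset.univ.image (G.dartOfNeighborSet u) from G.dart_fst_fiber u,
    Finset.sum_image (fun a _ b _ h => G.dartOfNeighborSet_injective u h)]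
  rw [SimpleGraph.neighborFinset_def, ← Finset.sum_set_coe]
  rfl

lemma sum_dart_ind (G : SimpleGraph V) [DecidableRel G.Adj] (w : Sym2 V → ℝ)
    (W : Finset V) :
    ∑ d : G.Dart, (if d.fst ∈ W then w d.edge else 0)
      = ∑ e ∈ G.edgeFinset,
          (Sym2.lift ⟨fun a b => ((if a ∈ W then (1:ℝ) else 0) +
            (if b ∈ W then (1:ℝ) else 0)), fun a b => by ring⟩ e) * w e := by
  rw [← Finset.sum_fiberwise_of_maps_to (g := fun d : G.Dart => d.edge)
      (fun d _ => SimpleGraph.mem_edgeFinset.mpr d.edge_mem)]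
  refine Finset.sum_congr rfl fun e he => ?_
  rw [SimpleGraph.mem_edgeFinset] at he
  induction' e with a b
  have hadj : G.Adj a b := he
  set d : G.Dart := ⟨(a, b), hadj⟩ with hd
  have hfib : (Finset.univ.filter fun d' : G.Dart => d'.edge = s(a, b)) = {d, d.symm} := by
    have := d.edge_fiber
    exact this
  rw [hfib, Finset.sum_pair d.symm_ne.symm]
  have h1 : d.edge = s(a, b) := rfl
  have h2 : d.symm.edge = s(a, b) := by rw [SimpleGraph.Dart.edge_symm]; rfl
  simp only [h1, h2]
  have hg : d.symm.fst = b := rfl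
  rw [hg, Sym2.lift_mk]
  show _ = ((if a ∈ W then (1:ℝ) else 0) + (if b ∈ W then (1:ℝ) else 0)) * w s(a, b)
  split_ifs <;> ring

lemma key_sum (G : SimpleGraph V) [DecidableRel G.Adj] (w : Sym2 V → ℝ)
    (W : Finset V) :
    ∑ u ∈ W, ∑ v ∈ G.neighborFinset u, w s(u, v)
      = 2 * inWeight G w W +
        ∑ e ∈ G.edgeFinset.filter
          (fun e => ∃ i j, e = s(i, j) ∧ i ∈ W ∧ j ∉ W), w e := by
  have h1 := sum_dart_fst G (fun u v => if u ∈ W then w s(u, v) else 0)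
  have h2 := sum_dart_ind G w W
  have h3 : ∑ d : G.Dart, (if d.fst ∈ W then w d.edge else 0)
      = ∑ d : G.Dart, (if d.fst ∈ W then w s(d.fst, d.snd) else 0) := by
    refine Finset.sum_congr rfl fun d _ => ?_
    congr 1
  have h4 : ∑ u : V, ∑ v ∈ G.neighborFinset u, (if u ∈ W then w s(u, v) else 0)
      = ∑ u ∈ W, ∑ v ∈ G.neighborFinset u, w s(u, v) := by
    have hswap : ∀ u : V, (∑ v ∈ G.neighborFinset u, if u ∈ W then w s(u, v) else 0)
        = if u ∈ W then ∑ v ∈ G.neighborFinset u, w s(u, v) else 0 := by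
      intro u; split_ifs with h <;> simp [h]
    rw [Finset.sum_congr rfl fun u _ => hswap u, ← Finset.sum_filter]
    congr 1
    ext u
    simp
  have h5 : ∀ e ∈ G.edgeFinset,
      (Sym2.lift ⟨fun a b => ((if a ∈ W then (1:ℝ) else 0) +
        (if b ∈ W then (1:ℝ) else 0)), fun a b => by ring⟩ e) * w e
      = (if (∀ v ∈ e, v ∈ W) then 2 * w e else 0) +
        (if (∃ i j, e = s(i, j) ∧ i ∈ W ∧ j ∉ W) then w e else 0) := by
    intro e he
    induction' e with a b
    rw [Sym2.lift_mk]
    show ((if a ∈ W then (1:ℝ) else 0) + (if b ∈ W then (1:ℝ) else 0)) * w s(a, b) = _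
    by_cases ha : a ∈ W <;> by_cases hb : b ∈ W
    · rw [if_pos ha, if_pos hb, if_pos (by intro v hv; rcases Sym2.mem_iff.mp hv with rfl | rfl
        <;> assumption), if_neg ?_]
      · ring
      · rintro ⟨i, j, hij, hi, hj⟩
        rcases Sym2.eq_iff.mp hij with ⟨rfl, rfl⟩ | ⟨rfl, rfl⟩ <;> exact hj (by assumption)
    · rw [if_pos ha, if_neg hb, if_neg (fun h => hb (h b (by simp))),
        if_pos ⟨a, b, rfl, ha, hb⟩]
      ring
    · rw [if_neg ha, if_pos hb, if_neg (fun h => ha (h a (by simp))),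
        if_pos ⟨b, a, Sym2.eq_swap.symm, hb, ha⟩]
      ring
    · rw [if_neg ha, if_neg hb, if_neg (fun h => ha (h a (by simp))), if_neg ?_]
      · ring
      · rintro ⟨i, j, hij, hi, hj⟩
        rcases Sym2.eq_iff.mp hij with ⟨rfl, rfl⟩ | ⟨rfl, rfl⟩
        · exact ha hi
        · exact hb hi
  have h6 : ∑ e ∈ G.edgeFinset,
      (Sym2.lift ⟨fun a b => ((if a ∈ W then (1:ℝ) else 0) +
        (if b ∈ W then (1:ℝ) else 0)), fun a b => by ring⟩ e) * w e
      = 2 * inWeight G w W +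
        ∑ e ∈ G.edgeFinset.filter
          (fun e => ∃ i j, e = s(i, j) ∧ i ∈ W ∧ j ∉ W), w e := by
    rw [Finset.sum_congr rfl h5, Finset.sum_add_distrib, ← Finset.sum_filter,
      ← Finset.sum_filter, inWeight, Finset.mul_sum]
  rw [← h4, ← h1, ← h3, h2]
  exact h6

/-- CUT identity: let `H = (V, E)` be a finite graph with nonnegative edge weights `w`,
`p(u) = (1/2) Σ_{v : uv ∈ E} w(uv)` and `K = Σ_{u ∈ V} max (p(u) - 1) 0`. Then for
every `W ⊆ V`,
`Σ_{u ∉ W} max (p(u)-1) 0 + Σ_{u ∈ W} max (1-p(u)) 0 + (1/2) Σ_{uv ∈ E, u ∈ W, v ∉ W} w(uv)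
  = |W| - w(W) + K`,
the left-hand side being the capacity of the cut `δ({s} ∪ W)` in the network `N(H,w)`. -/
theorem cut_identity (G : SimpleGraph V) [DecidableRel G.Adj]
    (w : Sym2 V → ℝ) (hw : ∀ e, 0 ≤ w e) (W : Finset V) :
    (∑ u ∈ Wᶜ, max (halfDeg G w u - 1) 0) +
      (∑ u ∈ W, max (1 - halfDeg G w u) 0) +
      (1 / 2) * ∑ e ∈ G.edgeFinset.filter
          (fun e => ∃ i j, e = s(i, j) ∧ i ∈ W ∧ j ∉ W), w e =
    (W.card : ℝ) - inWeight G w W + ∑ u : V, max (halfDeg G w u - 1) 0 := by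
  have key : ∑ u ∈ W, halfDeg G w u
      = inWeight G w W + (1 / 2) * ∑ e ∈ G.edgeFinset.filter
          (fun e => ∃ i j, e = s(i, j) ∧ i ∈ W ∧ j ∉ W), w e := by
    have := key_sum G w W
    simp only [halfDeg, ← Finset.mul_sum]
    rw [this]
    ring
  have hcompl : ∑ u ∈ Wᶜ, max (halfDeg G w u - 1) 0
      = ∑ u : V, max (halfDeg G w u - 1) 0 - ∑ u ∈ W, max (halfDeg G w u - 1) 0 := by
    rw [eq_sub_iff_add_eq, Finset.sum_compl_add_sum]
  have hmax : ∑ u ∈ W, max (1 - halfDeg G w u) 0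
      = ∑ u ∈ W, max (halfDeg G w u - 1) 0 + ((W.card : ℝ) - ∑ u ∈ W, halfDeg G w u) := by
    have : ∀ u ∈ W, max (1 - halfDeg G w u) 0
        = max (halfDeg G w u - 1) 0 + (1 - halfDeg G w u) := by
      intro u _
      rcases le_total (halfDeg G w u) 1 with h | h
      · rw [max_eq_left (by linarith), max_eq_right (by linarith)]; ring
      · rw [max_eq_right (by linarith), max_eq_left (by linarith)]; ring
    rw [Finset.sum_congr rfl this, Finset.sum_add_distrib, Finset.sum_sub_distrib]
    simp
  rw [hcompl, hmax]
  linarith [key]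
end
end

section
/- Modular generalization of the CUT identity: let H = (V, E) be a finite graph with nonnegative edge weights w : E → ℝ≥0 and let m : V → ℝ. For u ∈ V set p(u) = (1/2)·Σ_{v : uv∈E} w(uv), and let K = Σ_{u∈V} max(p(u) − m(u), 0). Then for every W ⊆ V: Σ_{u∉W} max(p(u) − m(u), 0) + Σ_{u∈W} max(m(u) − p(u), 0) + (1/2)·Σ_{uv∈E, u∈W, v∉W} w(uv) = Σ_{u∈W} m(u) − w(W) + K, where w(W) is the total weight of the edges with both endpoints in W. -/
open scoped Classical

noncomputable section

variable {V : Type*} [Fintype V] [DecidableEq V]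

lemma cut_sum_aux (G : SimpleGraph V) [DecidableRel G.Adj] (w : Sym2 V → ℝ)
    (W : Finset V) :
    ∑ e ∈ G.edgeFinset.filter (fun e => ∃ i j, e = s(i, j) ∧ i ∈ W ∧ j ∉ W), w e
      = ∑ p ∈ Finset.univ.filter
          (fun p : V × V => G.Adj p.1 p.2 ∧ p.1 ∈ W ∧ p.2 ∉ W), w s(p.1, p.2) := by
  refine (Finset.sum_bij (fun (p : V × V) _ => s(p.1, p.2)) ?_ ?_ ?_ ?_).symm
  · rintro ⟨a, b⟩ hp
    simp only [Finset.mem_filter, Finset.mem_univ, true_and] at hp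
    simp only [Finset.mem_filter, SimpleGraph.mem_edgeFinset, SimpleGraph.mem_edgeSet]
    exact ⟨hp.1, a, b, rfl, hp.2.1, hp.2.2⟩
  · rintro ⟨a, b⟩ ha ⟨c, d⟩ hc h
    simp only [Finset.mem_filter, Finset.mem_univ, true_and] at ha hc
    rw [Sym2.eq_iff] at h
    rcases h with ⟨rfl, rfl⟩ | ⟨rfl, rfl⟩
    · rfl
    · exact absurd ha.2.1 hc.2.2
  · rintro e he
    simp only [Finset.mem_filter] at he
    obtain ⟨i, j, rfl, hi, hj⟩ := he.2
    have hadj : G.Adj i j := by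
      rw [← SimpleGraph.mem_edgeSet, ← SimpleGraph.mem_edgeFinset]; exact he.1
    exact ⟨(i, j), by simp [hadj, hi, hj], rfl⟩
  · rintro ⟨a, b⟩ _; rfl

lemma both_sum_aux (G : SimpleGraph V) [DecidableRel G.Adj] (w : Sym2 V → ℝ)
    (W : Finset V) :
    2 * inWeight G w W
      = ∑ p ∈ Finset.univ.filter
          (fun p : V × V => G.Adj p.1 p.2 ∧ p.1 ∈ W ∧ p.2 ∈ W), w s(p.1, p.2) := by
  rw [inWeight, Finset.mul_sum]
  rw [← Finset.sum_fiberwise_of_maps_to (g := fun p : V × V => s(p.1, p.2))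
      (t := G.edgeFinset.filter (fun e => ∀ v ∈ e, v ∈ W)) ?_]
  · refine Finset.sum_congr rfl ?_
    rintro e he
    simp only [Finset.mem_filter, SimpleGraph.mem_edgeFinset, SimpleGraph.mem_edgeSet] at he
    induction e with
    | _ i j =>
      have hadj : G.Adj i j := he.1
      have hne : i ≠ j := hadj.ne
      have hi : i ∈ W := he.2 i (Sym2.mem_mk_left i j)
      have hj : j ∈ W := he.2 j (Sym2.mem_mk_right i j)
      have hfib : (Finset.univ.filter
          (fun p : V × V => G.Adj p.1 p.2 ∧ p.1 ∈ W ∧ p.2 ∈ W)).filter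
            (fun p => s(p.1, p.2) = s(i, j)) = {(i, j), (j, i)} := by
        ext ⟨a, b⟩
        simp only [Finset.mem_filter, Finset.mem_univ, true_and, Finset.mem_insert,
          Finset.mem_singleton, Sym2.eq_iff, Prod.mk.injEq]
        constructor
        · rintro ⟨-, ⟨rfl, rfl⟩ | ⟨rfl, rfl⟩⟩
          · left; exact ⟨rfl, rfl⟩
          · right; exact ⟨rfl, rfl⟩
        · rintro (⟨rfl, rfl⟩ | ⟨rfl, rfl⟩)
          · exact ⟨⟨hadj, hi, hj⟩, Or.inl ⟨rfl, rfl⟩⟩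
          · exact ⟨⟨hadj.symm, hj, hi⟩, Or.inr ⟨rfl, rfl⟩⟩
      rw [hfib]
      rw [Finset.sum_pair (by simp [hne, Prod.ext_iff] : ((i, j) : V × V) ≠ (j, i))]
      rw [Sym2.eq_swap (a := j) (b := i)]
      ring
  · rintro ⟨a, b⟩ hp
    simp only [Finset.mem_filter, Finset.mem_univ, true_and] at hp
    simp only [Finset.mem_filter, SimpleGraph.mem_edgeFinset, SimpleGraph.mem_edgeSet]
    refine ⟨hp.1, ?_⟩
    intro v hv
    rw [Sym2.mem_iff] at hv
    rcases hv with rfl | rfl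
    · exact hp.2.1
    · exact hp.2.2

lemma sum_halfDeg_aux (G : SimpleGraph V) [DecidableRel G.Adj] (w : Sym2 V → ℝ)
    (W : Finset V) :
    ∑ u ∈ W, halfDeg G w u
      = inWeight G w W + (1 / 2) *
        ∑ e ∈ G.edgeFinset.filter (fun e => ∃ i j, e = s(i, j) ∧ i ∈ W ∧ j ∉ W), w e := by
  have hT : ∑ u ∈ W, ∑ v ∈ G.neighborFinset u, w s(u, v)
      = ∑ p ∈ Finset.univ.filter
          (fun p : V × V => G.Adj p.1 p.2 ∧ p.1 ∈ W), w s(p.1, p.2) := by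
    have hset : Finset.univ.filter (fun p : V × V => G.Adj p.1 p.2 ∧ p.1 ∈ W)
        = (W ×ˢ Finset.univ).filter (fun p : V × V => G.Adj p.1 p.2) := by
      ext ⟨a, b⟩
      simp [Finset.mem_product, and_comm]
    rw [hset, Finset.sum_filter, Finset.sum_product]
    refine Finset.sum_congr rfl fun u _ => ?_
    rw [SimpleGraph.neighborFinset_eq_filter, Finset.sum_filter]
  have hsplit : ∑ p ∈ Finset.univ.filter
          (fun p : V × V => G.Adj p.1 p.2 ∧ p.1 ∈ W), w s(p.1, p.2)
      = (∑ p ∈ Finset.univ.filter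
          (fun p : V × V => G.Adj p.1 p.2 ∧ p.1 ∈ W ∧ p.2 ∈ W), w s(p.1, p.2))
        + ∑ p ∈ Finset.univ.filter
          (fun p : V × V => G.Adj p.1 p.2 ∧ p.1 ∈ W ∧ p.2 ∉ W), w s(p.1, p.2) := by
    rw [← Finset.sum_filter_add_sum_filter_not
      (Finset.univ.filter (fun p : V × V => G.Adj p.1 p.2 ∧ p.1 ∈ W))
      (fun p => p.2 ∈ W)]
    congr 1 <;> rw [Finset.filter_filter] <;> congr 1 <;> ext p <;>
      simp only [Finset.mem_filter, Finset.mem_univ, true_and] <;> tauto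
  have h2 := both_sum_aux G w W
  have h3 := cut_sum_aux G w W
  have h4 : ∑ u ∈ W, halfDeg G w u
      = (1 / 2) * ∑ u ∈ W, ∑ v ∈ G.neighborFinset u, w s(u, v) := by
    rw [Finset.mul_sum]; rfl
  rw [h4, hT, hsplit, ← h2, ← h3]
  ring

/-- Modular generalization of the CUT identity: let `H = (V, E)` be a finite graph
with nonnegative edge weights `w`, let `m : V → ℝ`, set
`p(u) = (1/2) Σ_{v : uv ∈ E} w(uv)` and `K = Σ_{u ∈ V} max (p(u) - m(u)) 0`. Then for
every `W ⊆ V`,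
`Σ_{u ∉ W} max (p(u)-m(u)) 0 + Σ_{u ∈ W} max (m(u)-p(u)) 0
   + (1/2) Σ_{uv ∈ E, u ∈ W, v ∉ W} w(uv) = Σ_{u ∈ W} m(u) - w(W) + K`. -/
theorem cut_identity_modular (G : SimpleGraph V) [DecidableRel G.Adj]
    (w : Sym2 V → ℝ) (hw : ∀ e, 0 ≤ w e) (m : V → ℝ) (W : Finset V) :
    (∑ u ∈ Wᶜ, max (halfDeg G w u - m u) 0) +
      (∑ u ∈ W, max (m u - halfDeg G w u) 0) +
      (1 / 2) * ∑ e ∈ G.edgeFinset.filter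
          (fun e => ∃ i j, e = s(i, j) ∧ i ∈ W ∧ j ∉ W), w e =
    (∑ u ∈ W, m u) - inWeight G w W + ∑ u : V, max (halfDeg G w u - m u) 0 := by
  have hmax : ∀ u ∈ W, max (m u - halfDeg G w u) 0
      = max (halfDeg G w u - m u) 0 + (m u - halfDeg G w u) := by
    intro u _
    rcases le_total (m u) (halfDeg G w u) with h | h
    · rw [max_eq_right (by linarith), max_eq_left (by linarith)]; ring
    · rw [max_eq_left (by linarith), max_eq_right (by linarith)]; ring
  rw [Finset.sum_congr rfl hmax, Finset.sum_add_distrib]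
  have hK : (∑ u ∈ Wᶜ, max (halfDeg G w u - m u) 0)
      + ∑ u ∈ W, max (halfDeg G w u - m u) 0
      = ∑ u : V, max (halfDeg G w u - m u) 0 := by
    rw [add_comm]
    exact Finset.sum_add_sum_compl W _
  have hp := sum_halfDeg_aux G w W
  have hms : ∑ u ∈ W, (m u - halfDeg G w u) = (∑ u ∈ W, m u) - ∑ u ∈ W, halfDeg G w u :=
    Finset.sum_sub_distrib _ _
  linarith
end
end

section
/- One-step correctness of the Optimal Cooperation Algorithm: let G = (V, E) be a finite graph with edge weights w : E → ℝ, 0 ≤ w(e) for all e. Let U ⊆ V, u ∈ V ∖ U, and let P be a Potts partition of the induced subgraph G(U) maximizing f over Potts partitions of G(U). If 𝒲 ⊆ P ∪ {{u}} contains {u} and minimizes |𝒲| − 1 − w(E(𝒲)) over all subsets of P ∪ {{u}} containing {u}, then the partition (P ∖ 𝒲) ∪ {∪_{X∈𝒲} X} of U ∪ {u} maximizes f over Potts partitions of G(U ∪ {u}). -/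
open scoped Classical
set_option linter.unusedSectionVars false
set_option maxHeartbeats 1000000

noncomputable section

variable {V : Type*} [Fintype V] [DecidableEq V]

/-- A family of vertex classes is a Potts partition (of its underlying vertex set, for
the corresponding induced subgraph of `G`) when every class induces a connected
subgraph of `G`. -/
def IsPotts (G : SimpleGraph V) (Q : Finset (Finset V)) : Prop :=
  ∀ X ∈ Q, (G.induce (↑X : Set V)).Connected

/-- `f` of a partition: its number of classes plus the total weight of the edges with
both endpoints in a single class (for classes contained in `U`, these are exactly the
edges of the induced subgraph `G(U)` with both endpoints in one class). -/
def partitionValue (G : SimpleGraph V) [DecidableRel G.Adj] (w : Sym2 V → ℝ)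
    (Q : Finset (Finset V)) : ℝ :=
  (Q.card : ℝ) +
    ∑ e ∈ G.edgeFinset.filter (fun e => ∃ X ∈ Q, ∀ v ∈ e, v ∈ X), w e

namespace OCA

variable (G : SimpleGraph V)

/-- Reachability within a finset of vertices. -/
inductive ReachIn (t : Finset V) : V → V → Prop
  | refl (x : V) (hx : x ∈ t) : ReachIn t x x
  | head (x y z : V) (hx : x ∈ t) (hxy : G.Adj x y) (h : ReachIn t y z) : ReachIn t x z

variable {G}

namespace ReachIn

variable {t t' : Finset V} {x y z : V}

lemma mem_left (h : ReachIn G t x y) : x ∈ t := by cases h <;> assumption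

lemma mem_right (h : ReachIn G t x y) : y ∈ t := by
  induction h with
  | refl _ hx => exact hx
  | head _ _ _ _ _ _ ih => exact ih

lemma trans (h : ReachIn G t x y) (h' : ReachIn G t y z) : ReachIn G t x z := by
  induction h with
  | refl _ hx => exact h'
  | head a b c ha hab _ ih => exact .head a b z ha hab (ih h')

lemma tail (h : ReachIn G t x y) (hyz : G.Adj y z) (hz : z ∈ t) : ReachIn G t x z :=
  h.trans (.head y z z h.mem_right hyz (.refl z hz))

lemma symm (h : ReachIn G t x y) : ReachIn G t y x := by
  induction h with
  | refl _ hx => exact .refl _ hx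
  | head a b c ha hab _ ih => exact ih.tail hab.symm ha

lemma mono (h : ReachIn G t x y) (hsub : t ⊆ t') : ReachIn G t' x y := by
  induction h with
  | refl _ hx => exact .refl _ (hsub hx)
  | head a b c ha hab _ ih => exact .head a b c (hsub ha) hab ih

lemma strengthen {x₀ : V} (h0 : ReachIn G t x₀ x) (h : ReachIn G t x y) :
    ReachIn G (t.filter (fun v => ReachIn G t x₀ v)) x y := by
  induction h with
  | refl a ha => exact .refl a (by simp [Finset.mem_filter, ha, h0])
  | head a b c ha hab hbc ih =>
    exact .head a b c (by simp [Finset.mem_filter, ha, h0]) hab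
      (ih (h0.tail hab hbc.mem_left))

end ReachIn

/-- a finset is `Conn` if all its elements are mutually reachable inside it. -/
def Conn (G : SimpleGraph V) (X : Finset V) : Prop := ∀ x ∈ X, ∀ y ∈ X, ReachIn G X x y

lemma conn_singleton (v : V) : Conn G ({v} : Finset V) := by
  intro x hx y hy
  simp only [Finset.mem_singleton] at hx hy
  subst hx; subst hy
  exact .refl _ (by simp)

lemma conn_union {X Y : Finset V} (hX : Conn G X) (hY : Conn G Y)
    (hXY : (X ∩ Y).Nonempty) : Conn G (X ∪ Y) := by
  obtain ⟨c, hc⟩ := hXY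
  simp only [Finset.mem_inter] at hc
  have key : ∀ a ∈ X ∪ Y, ReachIn G (X ∪ Y) a c := by
    intro a ha
    rcases Finset.mem_union.1 ha with h | h
    · exact (hX a h c hc.1).mono Finset.subset_union_left
    · exact (hY a h c hc.2).mono Finset.subset_union_right
  intro a ha b hb
  exact (key a ha).trans (key b hb).symm

/-- Bridge: `Conn` implies connectivity of the induced subgraph. -/
lemma conn_to_connected {X : Finset V} (hne : X.Nonempty) (h : Conn G X) :
    (G.induce (↑X : Set V)).Connected := by
  rw [SimpleGraph.connected_iff]
  refine ⟨?_, ?_⟩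
  · have aux : ∀ {p q : V} (hr : ReachIn G X p q),
        (G.induce (↑X : Set V)).Reachable ⟨p, hr.mem_left⟩ ⟨q, hr.mem_right⟩ := by
      intro p q hr
      induction hr with
      | refl x hx => rfl
      | head p q r hp hpq hqr ih =>
        exact (SimpleGraph.Adj.reachable
          (by exact hpq : (G.induce (↑X : Set V)).Adj ⟨p, hp⟩ ⟨q, hqr.mem_left⟩)).trans ih
    rintro ⟨a, ha⟩ ⟨b, hb⟩
    exact aux (h a ha b hb)
  · obtain ⟨a, ha⟩ := hne
    exact ⟨⟨a, ha⟩⟩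

lemma connected_to_conn {X : Finset V} (h : (G.induce (↑X : Set V)).Connected) :
    Conn G X := by
  intro a ha b hb
  obtain ⟨p⟩ := h.preconnected ⟨a, ha⟩ ⟨b, hb⟩
  clear h
  generalize hA : (⟨a, ha⟩ : (↑X : Set V)) = A at p
  generalize hB : (⟨b, hb⟩ : (↑X : Set V)) = B at p
  -- induction on the walk
  induction p generalizing a with
  | nil =>
    subst hA
    cases hB
    exact .refl _ ha
  | @cons p q r hpq pw ih =>
    subst hA
    exact .head a q.1 b ha hpq (ih q.1 q.2 rfl hB)

end OCA
-- chunk B: partitions, partOf, merge lemma (appended after chunk A content)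
namespace OCA

variable {G : SimpleGraph V}

/-- edges lying inside a single class of the family `A`. -/
def insideEdges (G : SimpleGraph V) [DecidableRel G.Adj] (A : Finset (Finset V)) :
    Finset (Sym2 V) :=
  G.edgeFinset.filter (fun e => ∃ X ∈ A, ∀ v ∈ e, v ∈ X)

/-- `A` is a partition of `t` into nonempty classes. -/
structure Partn (t : Finset V) (A : Finset (Finset V)) : Prop where
  pd : ∀ X ∈ A, ∀ Y ∈ A, (X ∩ Y).Nonempty → X = Y
  sub : ∀ X ∈ A, X ⊆ t
  cover : ∀ v ∈ t, ∃ X ∈ A, v ∈ X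
  ne : ∀ X ∈ A, X.Nonempty

/-- the class of `v` in the family `A`. -/
def partOf (A : Finset (Finset V)) (v : V) : Finset V :=
  if h : ∃ X ∈ A, v ∈ X then h.choose else ∅

lemma partOf_spec {A : Finset (Finset V)} {v : V} (h : ∃ X ∈ A, v ∈ X) :
    partOf A v ∈ A ∧ v ∈ partOf A v := by
  rw [partOf, dif_pos h]
  exact ⟨h.choose_spec.1, h.choose_spec.2⟩

lemma partOf_mem {t : Finset V} {A : Finset (Finset V)} (hA : Partn t A) {v : V}
    (hv : v ∈ t) : partOf A v ∈ A := (partOf_spec (hA.cover v hv)).1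

lemma mem_partOf {t : Finset V} {A : Finset (Finset V)} (hA : Partn t A) {v : V}
    (hv : v ∈ t) : v ∈ partOf A v := (partOf_spec (hA.cover v hv)).2

lemma partOf_eq {t : Finset V} {A : Finset (Finset V)} (hA : Partn t A) {v : V}
    (hv : v ∈ t) {X : Finset V} (hX : X ∈ A) (hvX : v ∈ X) : partOf A v = X :=
  hA.pd _ (partOf_mem hA hv) _ hX ⟨v, Finset.mem_inter.2 ⟨mem_partOf hA hv, hvX⟩⟩

lemma Partn.sup_eq {t : Finset V} {A : Finset (Finset V)} (hA : Partn t A) :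
    A.sup id = t := by
  apply le_antisymm
  · exact Finset.sup_le fun X hX => hA.sub X hX
  · intro v hv
    obtain ⟨X, hX, hvX⟩ := hA.cover v hv
    exact Finset.mem_sup.2 ⟨X, hX, hvX⟩

/-- build a `Finpartition` from a `Partn`. -/
def Partn.toFinpartition {t : Finset V} {A : Finset (Finset V)} (hA : Partn t A) :
    Finpartition t where
  parts := A
  supIndep := by
    rw [Finset.supIndep_iff_pairwiseDisjoint]
    intro X hX Y hY hXY
    rw [Function.onFun, Finset.disjoint_left]
    intro v hvX hvY
    exact hXY (hA.pd X hX Y hY ⟨v, Finset.mem_inter.2 ⟨hvX, hvY⟩⟩)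
  sup_parts := hA.sup_eq
  bot_notMem := fun h => by
    obtain ⟨x, hx⟩ := hA.ne _ h
    exact absurd hx (by simp)

lemma Finpartition.toPartn {t : Finset V} (Q : Finpartition t) : Partn t Q.parts where
  pd := fun X hX Y hY hne => by
    by_contra h
    obtain ⟨v, hv⟩ := hne
    rw [Finset.mem_inter] at hv
    exact (Finset.disjoint_left.1
      (Q.supIndep.pairwiseDisjoint hX hY h) hv.1) hv.2
  sub := fun X hX => Q.le hX
  cover := fun v hv => by
    have := Q.sup_parts
    rw [← this] at hv
    exact Finset.mem_sup.1 hv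
  ne := fun X hX => Finset.nonempty_iff_ne_empty.2 (Q.ne_bot hX)

section Merge

variable {t : Finset V} {A 𝒜 : Finset (Finset V)}

lemma sup_nonempty_of_mem (h1 : 𝒜 ⊆ A) (h2 : 𝒜.Nonempty) {tt : Finset V}
    (hA : Partn tt A) : (𝒜.sup id).Nonempty := by
  obtain ⟨X, hX⟩ := h2
  obtain ⟨x, hx⟩ := hA.ne X (h1 hX)
  exact ⟨x, Finset.mem_sup.2 ⟨X, hX, hx⟩⟩

lemma sup_notmem (hA : Partn t A) (h1 : 𝒜 ⊆ A) (h2 : 𝒜.Nonempty) :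
    𝒜.sup id ∉ A \ 𝒜 := by
  intro h
  rw [Finset.mem_sdiff] at h
  obtain ⟨X, hX⟩ := h2
  obtain ⟨x, hx⟩ := hA.ne X (h1 hX)
  have : (𝒜.sup id ∩ X).Nonempty := ⟨x, Finset.mem_inter.2 ⟨Finset.mem_sup.2 ⟨X, hX, hx⟩, hx⟩⟩
  exact h.2 ((hA.pd _ h.1 _ (h1 hX) this) ▸ hX)

lemma merge_partn (hA : Partn t A) (h1 : 𝒜 ⊆ A) (h2 : 𝒜.Nonempty) :
    Partn t ((A \ 𝒜) ∪ {𝒜.sup id}) where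
  pd := by
    intro X hX Y hY hne
    rw [Finset.mem_union, Finset.mem_sdiff, Finset.mem_singleton] at hX hY
    obtain ⟨v, hv⟩ := hne
    rw [Finset.mem_inter] at hv
    rcases hX with ⟨hXA, hX𝒜⟩ | rfl <;> rcases hY with ⟨hYA, hY𝒜⟩ | rfl
    · exact hA.pd X hXA Y hYA ⟨v, Finset.mem_inter.2 hv⟩
    · obtain ⟨W, hW, hvW⟩ := Finset.mem_sup.1 hv.2
      exact absurd ((hA.pd X hXA W (h1 hW) ⟨v, Finset.mem_inter.2 ⟨hv.1, hvW⟩⟩) ▸ hW) hX𝒜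
    · obtain ⟨W, hW, hvW⟩ := Finset.mem_sup.1 hv.1
      exact absurd ((hA.pd Y hYA W (h1 hW) ⟨v, Finset.mem_inter.2 ⟨hv.2, hvW⟩⟩) ▸ hW) hY𝒜
    · rfl
  sub := by
    intro X hX
    rw [Finset.mem_union, Finset.mem_sdiff, Finset.mem_singleton] at hX
    rcases hX with ⟨hXA, _⟩ | rfl
    · exact hA.sub X hXA
    · exact Finset.sup_le fun W hW => hA.sub W (h1 hW)
  cover := by
    intro v hv
    obtain ⟨X, hX, hvX⟩ := hA.cover v hv
    by_cases h : X ∈ 𝒜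
    · exact ⟨𝒜.sup id, by simp, Finset.mem_sup.2 ⟨X, h, hvX⟩⟩
    · exact ⟨X, by simp [Finset.mem_sdiff, hX, h], hvX⟩
  ne := by
    intro X hX
    rw [Finset.mem_union, Finset.mem_sdiff, Finset.mem_singleton] at hX
    rcases hX with ⟨hXA, _⟩ | rfl
    · exact hA.ne X hXA
    · exact sup_nonempty_of_mem h1 h2 hA

lemma merge_card (hA : Partn t A) (h1 : 𝒜 ⊆ A) (h2 : 𝒜.Nonempty) :
    ((A \ 𝒜) ∪ {𝒜.sup id}).card + 𝒜.card = A.card + 1 := by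
  rw [Finset.union_comm, ← Finset.insert_eq,
    Finset.card_insert_of_notMem (sup_notmem hA h1 h2), Finset.card_sdiff_of_subset h1]
  have := Finset.card_le_card h1
  omega

variable [DecidableRel G.Adj]

lemma merge_inside (hA : Partn t A) (h1 : 𝒜 ⊆ A) :
    insideEdges G ((A \ 𝒜) ∪ {𝒜.sup id}) = insideEdges G A ∪ crossEdges G 𝒜 := by
  ext e
  simp only [insideEdges, crossEdges, Finset.mem_union, Finset.mem_filter]
  constructor
  · rintro ⟨he, X, hX, hin⟩
    simp only [Finset.mem_sdiff, Finset.mem_singleton] at hX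
    rcases hX with ⟨hXA, _⟩ | rfl
    · exact Or.inl ⟨he, X, hXA, hin⟩
    · induction e using Sym2.ind with
      | _ i j =>
        obtain ⟨X, hX, hiX⟩ := Finset.mem_sup.1 (hin i (by simp))
        obtain ⟨Y, hY, hjY⟩ := Finset.mem_sup.1 (hin j (by simp))
        by_cases hXY : X = Y
        · subst hXY
          exact Or.inl ⟨he, X, h1 hX, by intro v hv; rcases Sym2.mem_iff.1 hv with rfl | rfl
            <;> assumption⟩
        · exact Or.inr ⟨he, X, hX, Y, hY, hXY, i, j, rfl, hiX, hjY⟩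
  · rintro (⟨he, X, hXA, hin⟩ | ⟨he, X, hX, Y, hY, hXY, i, j, rfl, hiX, hjY⟩)
    · refine ⟨he, ?_⟩
      by_cases h : X ∈ 𝒜
      · exact ⟨𝒜.sup id, by simp, fun v hv => Finset.mem_sup.2 ⟨X, h, hin v hv⟩⟩
      · exact ⟨X, by simp [Finset.mem_sdiff, hXA, h], hin⟩
    · refine ⟨he, 𝒜.sup id, by simp, ?_⟩
      intro v hv
      rcases Sym2.mem_iff.1 hv with rfl | rfl
      · exact Finset.mem_sup.2 ⟨X, hX, hiX⟩
      · exact Finset.mem_sup.2 ⟨Y, hY, hjY⟩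

lemma cross_disjoint_inside (hA : Partn t A) (h1 : 𝒜 ⊆ A) :
    Disjoint (insideEdges G A) (crossEdges G 𝒜) := by
  rw [Finset.disjoint_left]
  rintro e he hce
  simp only [insideEdges, crossEdges, Finset.mem_filter] at he hce
  obtain ⟨_, W, hW, hin⟩ := he
  obtain ⟨_, X, hX, Y, hY, hXY, i, j, rfl, hiX, hjY⟩ := hce
  have h1' : W = X := hA.pd W hW X (h1 hX)
    ⟨i, Finset.mem_inter.2 ⟨hin i (by simp), hiX⟩⟩
  have h2' : W = Y := hA.pd W hW Y (h1 hY)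
    ⟨j, Finset.mem_inter.2 ⟨hin j (by simp), hjY⟩⟩
  exact hXY (h1' ▸ h2')

lemma merge_value (w : Sym2 V → ℝ) (hA : Partn t A) (h1 : 𝒜 ⊆ A) (h2 : 𝒜.Nonempty) :
    partitionValue G w ((A \ 𝒜) ∪ {𝒜.sup id}) =
      partitionValue G w A + 1 - 𝒜.card + ∑ e ∈ crossEdges G 𝒜, w e := by
  have hcard := merge_card hA h1 h2
  have hins := merge_inside (G := G) hA h1
  have hdisj := cross_disjoint_inside (G := G) hA h1
  have hc : (((A \ 𝒜) ∪ {𝒜.sup id}).card : ℝ) + 𝒜.card = (A.card : ℝ) + 1 := by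
    exact_mod_cast congrArg (Nat.cast (R := ℝ)) hcard
  show ((((A \ 𝒜) ∪ {𝒜.sup id}).card : ℝ) + ∑ e ∈ insideEdges G _, w e) = _
  rw [hins, Finset.sum_union hdisj]
  show _ = ((A.card : ℝ) + ∑ e ∈ insideEdges G A, w e) + 1 - 𝒜.card + _
  linarith

end Merge

end OCA
namespace OCA

variable {G : SimpleGraph V}

/-- the connected component of `v` inside the vertex set `t`. -/
def reachClass (G : SimpleGraph V) (t : Finset V) (v : V) : Finset V :=
  t.filter (fun x => ReachIn G t v x)

lemma mem_reachClass_self {t : Finset V} {v : V} (hv : v ∈ t) : v ∈ reachClass G t v := by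
  simp [reachClass, ReachIn.refl v hv, hv]

lemma reachClass_subset {t : Finset V} {v : V} : reachClass G t v ⊆ t :=
  Finset.filter_subset _ _

lemma mem_reachClass {t : Finset V} {v x : V} :
    x ∈ reachClass G t v ↔ x ∈ t ∧ ReachIn G t v x := Finset.mem_filter

lemma reachClass_eq {t : Finset V} {v x : V} (hx : x ∈ reachClass G t v) :
    reachClass G t x = reachClass G t v := by
  rw [mem_reachClass] at hx
  ext y
  rw [mem_reachClass, mem_reachClass]
  exact ⟨fun ⟨hy, hr⟩ => ⟨hy, hx.2.trans hr⟩, fun ⟨hy, hr⟩ => ⟨hy, hx.2.symm.trans hr⟩⟩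

lemma conn_reachClass {t : Finset V} {v : V} : Conn G (reachClass G t v) := by
  intro x hx y hy
  rw [mem_reachClass] at hx hy
  have h : ReachIn G t x y := hx.2.symm.trans hy.2
  have := ReachIn.strengthen hx.2 h
  exact this

/-- connected components of a vertex set, as a partition. -/
def compPartition (G : SimpleGraph V) (t : Finset V) : Finset (Finset V) :=
  t.image (reachClass G t)

lemma compPartition_partn (t : Finset V) : Partn t (compPartition G t) where
  pd := by
    rintro X hX Y hY ⟨z, hz⟩
    rw [Finset.mem_inter] at hz
    obtain ⟨a, _, rfl⟩ := Finset.mem_image.1 hX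
    obtain ⟨b, _, rfl⟩ := Finset.mem_image.1 hY
    rw [← reachClass_eq hz.1, ← reachClass_eq hz.2]
  sub := by
    rintro X hX
    obtain ⟨a, _, rfl⟩ := Finset.mem_image.1 hX
    exact reachClass_subset
  cover := fun v hv => ⟨reachClass G t v, Finset.mem_image_of_mem _ hv,
    mem_reachClass_self hv⟩
  ne := by
    rintro X hX
    obtain ⟨a, ha, rfl⟩ := Finset.mem_image.1 hX
    exact ⟨a, mem_reachClass_self ha⟩

lemma compPartition_conn (t : Finset V) : ∀ X ∈ compPartition G t, Conn G X := by
  rintro X hX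
  obtain ⟨a, _, rfl⟩ := Finset.mem_image.1 hX
  exact conn_reachClass

section Meet

variable {t : Finset V} {A B : Finset (Finset V)}

/-- class of `v` in the (Potts) meet of `A` and `B`. -/
def meetCls (G : SimpleGraph V) (A B : Finset (Finset V)) (v : V) : Finset V :=
  reachClass G (partOf A v ∩ partOf B v) v

/-- the (Potts) common refinement of two partitions. -/
def meetParts (G : SimpleGraph V) (t : Finset V) (A B : Finset (Finset V)) :
    Finset (Finset V) :=
  t.image (fun v => meetCls G A B v)

variable (hA : Partn t A) (hB : Partn t B)
include hA hB

lemma mem_meetCls_self {v : V} (hv : v ∈ t) : v ∈ meetCls G A B v :=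
  mem_reachClass_self (Finset.mem_inter.2 ⟨mem_partOf hA hv, mem_partOf hB hv⟩)

lemma meetCls_subset {v : V} : meetCls G A B v ⊆ partOf A v ∩ partOf B v :=
  reachClass_subset

lemma meetCls_eq {v z : V} (hv : v ∈ t) (hz : z ∈ meetCls G A B v) :
    meetCls G A B z = meetCls G A B v := by
  have hsub := meetCls_subset (G := G) hA hB (v := v)
  have hz' := Finset.mem_inter.1 (hsub hz)
  have hzt : z ∈ t := hA.sub _ (partOf_mem hA hv) hz'.1
  have hpA : partOf A z = partOf A v := partOf_eq hA hzt (partOf_mem hA hv) hz'.1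
  have hpB : partOf B z = partOf B v := partOf_eq hB hzt (partOf_mem hB hv) hz'.2
  unfold meetCls
  rw [hpA, hpB]
  exact reachClass_eq hz

lemma meetParts_partn : Partn t (meetParts G t A B) where
  pd := by
    rintro X hX Y hY ⟨z, hz⟩
    rw [Finset.mem_inter] at hz
    obtain ⟨a, ha, rfl⟩ := Finset.mem_image.1 hX
    obtain ⟨b, hb, rfl⟩ := Finset.mem_image.1 hY
    rw [← meetCls_eq hA hB ha hz.1, ← meetCls_eq hA hB hb hz.2]
  sub := by
    rintro X hX
    obtain ⟨a, ha, rfl⟩ := Finset.mem_image.1 hX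
    exact (meetCls_subset hA hB).trans ((Finset.inter_subset_left).trans
      (hA.sub _ (partOf_mem hA ha)))
  cover := fun v hv => ⟨meetCls G A B v, Finset.mem_image_of_mem _ hv,
    mem_meetCls_self hA hB hv⟩
  ne := by
    rintro X hX
    obtain ⟨a, ha, rfl⟩ := Finset.mem_image.1 hX
    exact ⟨a, mem_meetCls_self hA hB ha⟩

lemma meetParts_conn : ∀ X ∈ meetParts G t A B, Conn G X := by
  rintro X hX
  obtain ⟨a, _, rfl⟩ := Finset.mem_image.1 hX
  exact conn_reachClass

variable [DecidableRel G.Adj]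

lemma inside_inter_subset_meet :
    insideEdges G A ∩ insideEdges G B ⊆ insideEdges G (meetParts G t A B) := by
  intro e he
  rw [Finset.mem_inter] at he
  obtain ⟨he1, he2⟩ := he
  simp only [insideEdges, Finset.mem_filter] at he1 he2 ⊢
  obtain ⟨hge, X, hXA, hinX⟩ := he1
  obtain ⟨-, Y, hYB, hinY⟩ := he2
  refine ⟨hge, ?_⟩
  induction e using Sym2.ind with
  | _ i j =>
    have hadj : G.Adj i j := (SimpleGraph.mem_edgeFinset.1 hge)
    have hiX : i ∈ X := hinX i (by simp)
    have hjX : j ∈ X := hinX j (by simp)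
    have hiY : i ∈ Y := hinY i (by simp)
    have hjY : j ∈ Y := hinY j (by simp)
    have hit : i ∈ t := hA.sub X hXA hiX
    have hjt : j ∈ t := hA.sub X hXA hjX
    have hpAi : partOf A i = X := partOf_eq hA hit hXA hiX
    have hpBi : partOf B i = Y := partOf_eq hB hit hYB hiY
    have hSi : i ∈ partOf A i ∩ partOf B i := by
      rw [hpAi, hpBi]; exact Finset.mem_inter.2 ⟨hiX, hiY⟩
    have hSj : j ∈ partOf A i ∩ partOf B i := by
      rw [hpAi, hpBi]; exact Finset.mem_inter.2 ⟨hjX, hjY⟩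
    refine ⟨meetCls G A B i, Finset.mem_image_of_mem _ hit, ?_⟩
    intro v hv
    rcases Sym2.mem_iff.1 hv with rfl | rfl
    · exact mem_meetCls_self hA hB hit
    · exact mem_reachClass.2 ⟨hSj, (ReachIn.refl i hSi).tail hadj hSj⟩

omit hA hB in
/-- number of classes of `A` meeting `Y`. -/
def nmeets (A : Finset (Finset V)) (Y : Finset V) : ℕ :=
  (A.filter (fun X => (X ∩ Y).Nonempty)).card

lemma meet_count : ∑ Y ∈ B, nmeets A Y ≤ (meetParts G t A B).card := by
  classical
  have h1 : ∀ Y ∈ B, nmeets A Y ≤ ((meetParts G t A B).filter (· ⊆ Y)).card := by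
    intro Y hY
    apply Finset.card_le_card_of_injOn
      (fun X => if h : (X ∩ Y).Nonempty then meetCls G A B h.choose else ∅)
    · intro X hX
      rw [Finset.mem_coe, Finset.mem_filter] at hX
      obtain ⟨hXA, hXY⟩ := hX
      dsimp only
      rw [dif_pos hXY]
      have hp := hXY.choose_spec
      rw [Finset.mem_inter] at hp
      have hpt : hXY.choose ∈ t := hA.sub X hXA hp.1
      have hpB : partOf B hXY.choose = Y := partOf_eq hB hpt hY hp.2
      rw [Finset.mem_coe, Finset.mem_filter]
      exact ⟨Finset.mem_image_of_mem _ hpt,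
        (meetCls_subset hA hB).trans (by rw [hpB]; exact Finset.inter_subset_right)⟩
    · intro X hX X' hX' hEq
      rw [Finset.mem_coe, Finset.mem_filter] at hX hX'
      dsimp only at hEq
      rw [dif_pos hX.2, dif_pos hX'.2] at hEq
      have hp := hX.2.choose_spec; have hp' := hX'.2.choose_spec
      rw [Finset.mem_inter] at hp hp'
      have hpt : hX.2.choose ∈ t := hA.sub X hX.1 hp.1
      have hpt' : hX'.2.choose ∈ t := hA.sub X' hX'.1 hp'.1
      have hm : hX.2.choose ∈ meetCls G A B hX'.2.choose := by
        rw [← hEq]; exact mem_meetCls_self hA hB hpt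
      have hsub' := meetCls_subset (G := G) hA hB (v := hX'.2.choose)
      have : hX.2.choose ∈ partOf A hX'.2.choose := (Finset.mem_inter.1 (hsub' hm)).1
      rw [partOf_eq hA hpt' hX'.1 hp'.1] at this
      exact hA.pd X hX.1 X' hX'.1 ⟨hX.2.choose, Finset.mem_inter.2 ⟨hp.1, this⟩⟩
  have h2 : ∑ Y ∈ B, ((meetParts G t A B).filter (· ⊆ Y)).card
      ≤ (meetParts G t A B).card := by
    rw [← Finset.card_biUnion]
    · exact Finset.card_le_card (Finset.biUnion_subset.2 fun Y _ =>
        Finset.filter_subset _ _)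
    · intro Y hY Y' hY' hne
      rw [Function.onFun, Finset.disjoint_left]
      intro C hC hC'
      rw [Finset.mem_filter] at hC hC'
      obtain ⟨c, hc⟩ := (meetParts_partn hA hB).ne C hC.1
      exact hne (hB.pd Y hY Y' hY' ⟨c, Finset.mem_inter.2 ⟨hC.2 hc, hC'.2 hc⟩⟩)
  exact le_trans (Finset.sum_le_sum h1) h2

lemma meetCls_singleton {x : V} (hx : x ∈ t) (hxB : ({x} : Finset V) ∈ B) :
    meetCls G A B x = {x} := by
  have hpB : partOf B x = {x} := partOf_eq hB hx hxB (by simp)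
  apply Finset.Subset.antisymm
  · exact (meetCls_subset hA hB).trans (by rw [hpB]; exact Finset.inter_subset_right)
  · intro v hv
    rw [Finset.mem_singleton] at hv
    subst hv
    exact mem_meetCls_self hA hB hx

end Meet

section Singleton

variable {t₀ : Finset V} {u : V} {A : Finset (Finset V)}

lemma singleton_notmem (hA : Partn t₀ A) (hu : u ∉ t₀) : ({u} : Finset V) ∉ A :=
  fun h => hu (hA.sub _ h (by simp))

lemma insert_singleton_partn (hA : Partn t₀ A) (hu : u ∉ t₀) :
    Partn (insert u t₀) (insert {u} A) where
  pd := by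
    intro X hX Y hY hne
    rw [Finset.mem_insert] at hX hY
    obtain ⟨v, hv⟩ := hne
    rw [Finset.mem_inter] at hv
    rcases hX with rfl | hX <;> rcases hY with rfl | hY
    · rfl
    · exact absurd (hA.sub Y hY hv.2) (by rw [Finset.mem_singleton.1 hv.1]; exact hu)
    · exact absurd (hA.sub X hX hv.1) (by rw [Finset.mem_singleton.1 hv.2]; exact hu)
    · exact hA.pd X hX Y hY ⟨v, Finset.mem_inter.2 hv⟩
  sub := by
    intro X hX
    rw [Finset.mem_insert] at hX
    rcases hX with rfl | hX
    · simp
    · exact (hA.sub X hX).trans (Finset.subset_insert _ _)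
  cover := by
    intro v hv
    rcases Finset.mem_insert.1 hv with rfl | hv
    · exact ⟨{v}, by simp, by simp⟩
    · obtain ⟨X, hX, hvX⟩ := hA.cover v hv
      exact ⟨X, Finset.mem_insert_of_mem hX, hvX⟩
  ne := by
    intro X hX
    rcases Finset.mem_insert.1 hX with rfl | hX
    · simp
    · exact hA.ne X hX

lemma erase_singleton_partn (hA : Partn (insert u t₀) A) (hu : u ∉ t₀)
    (huA : ({u} : Finset V) ∈ A) : Partn t₀ (A.erase {u}) where
  pd := fun X hX Y hY h =>
    hA.pd X (Finset.mem_of_mem_erase hX) Y (Finset.mem_of_mem_erase hY) h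
  sub := by
    intro X hX v hv
    have hX' := Finset.mem_of_mem_erase hX
    have hne := Finset.ne_of_mem_erase hX
    rcases Finset.mem_insert.1 (hA.sub X hX' hv) with rfl | h
    · exact absurd (hA.pd X hX' _ huA ⟨v, Finset.mem_inter.2 ⟨hv, by simp⟩⟩) hne
    · exact h
  cover := by
    intro v hv
    obtain ⟨X, hX, hvX⟩ := hA.cover v (Finset.mem_insert_of_mem hv)
    refine ⟨X, Finset.mem_erase.2 ⟨?_, hX⟩, hvX⟩
    rintro rfl
    rw [Finset.mem_singleton] at hvX
    exact hu (hvX ▸ hv)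
  ne := fun X hX => hA.ne X (Finset.mem_of_mem_erase hX)

variable [DecidableRel G.Adj]

lemma inside_no_singleton {w : Sym2 V → ℝ} :
    insideEdges G (insert ({u} : Finset V) A) = insideEdges G A := by
  ext e
  simp only [insideEdges, Finset.mem_filter]
  constructor
  · rintro ⟨hge, X, hX, hin⟩
    rcases Finset.mem_insert.1 hX with rfl | hX
    · exfalso
      induction e using Sym2.ind with
      | _ i j =>
        have hi := Finset.mem_singleton.1 (hin i (by simp))
        have hj := Finset.mem_singleton.1 (hin j (by simp))
        exact (SimpleGraph.mem_edgeFinset.1 hge).ne (by rw [hi, hj])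
    · exact ⟨hge, X, hX, hin⟩
  · rintro ⟨hge, X, hX, hin⟩
    exact ⟨hge, X, Finset.mem_insert_of_mem hX, hin⟩

lemma value_insert_singleton (w : Sym2 V → ℝ) (h : ({u} : Finset V) ∉ A) :
    partitionValue G w (insert {u} A) = partitionValue G w A + 1 := by
  show ((insert ({u} : Finset V) A).card : ℝ) + ∑ e ∈ insideEdges G _, w e = _
  rw [Finset.card_insert_of_notMem h, inside_no_singleton (w := w)]
  show _ = ((A.card : ℝ) + ∑ e ∈ insideEdges G A, w e) + 1
  push_cast
  ring

lemma value_erase_singleton (w : Sym2 V → ℝ) (h : ({u} : Finset V) ∈ A) :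
    partitionValue G w A = partitionValue G w (A.erase {u}) + 1 := by
  have : A = insert {u} (A.erase {u}) := (Finset.insert_erase h).symm
  conv_lhs => rw [this]
  rw [value_insert_singleton w (Finset.notMem_erase _ _)]

end Singleton

end OCA
namespace OCA

variable {G : SimpleGraph V}

lemma conn_union_family {Y : Finset V} (hY : Conn G Y) (M : Finset (Finset V))
    (h : ∀ X ∈ M, Conn G X ∧ (X ∩ Y).Nonempty) : Conn G (Y ∪ M.sup id) := by
  classical
  induction M using Finset.induction with
  | empty => simpa using hY
  | @insert a s ha ih =>
    rw [Finset.sup_insert]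
    have h1 : Y ∪ (id a ⊔ s.sup id) = a ∪ (Y ∪ s.sup id) := by
      ext v
      simp only [Finset.mem_union, Finset.sup_eq_union, id]
      tauto
    rw [h1]
    have h2 := h a (Finset.mem_insert_self a s)
    refine conn_union h2.1 (ih fun X hX => h X (Finset.mem_insert_of_mem hX)) ?_
    obtain ⟨p, hp⟩ := h2.2
    rw [Finset.mem_inter] at hp
    exact ⟨p, Finset.mem_inter.2 ⟨hp.1, Finset.mem_union_left _ hp.2⟩⟩

lemma nmeets_mono {t : Finset V} {A A₁ : Finset (Finset V)} (hA : Partn t A)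
    (hA₁ : Partn t A₁) (hco : ∀ X ∈ A, ∃ X' ∈ A₁, X ⊆ X') (Y' : Finset V) :
    nmeets A₁ Y' ≤ nmeets A Y' := by
  classical
  apply Finset.card_le_card_of_injOn
    (fun X₁ => if h : (X₁ ∩ Y').Nonempty then partOf A h.choose else ∅)
  · intro X₁ hX₁
    rw [Finset.mem_coe, Finset.mem_filter] at hX₁
    dsimp only
    rw [dif_pos hX₁.2]
    have hp := hX₁.2.choose_spec
    rw [Finset.mem_inter] at hp
    have hpt : hX₁.2.choose ∈ t := hA₁.sub _ hX₁.1 hp.1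
    rw [Finset.mem_coe, Finset.mem_filter]
    exact ⟨partOf_mem hA hpt, ⟨hX₁.2.choose, Finset.mem_inter.2 ⟨mem_partOf hA hpt, hp.2⟩⟩⟩
  · intro X₁ hX₁ X₂ hX₂ hEq
    rw [Finset.mem_coe, Finset.mem_filter] at hX₁ hX₂
    dsimp only at hEq
    rw [dif_pos hX₁.2, dif_pos hX₂.2] at hEq
    have hp1 := hX₁.2.choose_spec
    have hp2 := hX₂.2.choose_spec
    rw [Finset.mem_inter] at hp1 hp2
    have hpt1 : hX₁.2.choose ∈ t := hA₁.sub _ hX₁.1 hp1.1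
    have hpt2 : hX₂.2.choose ∈ t := hA₁.sub _ hX₂.1 hp2.1
    -- partOf A p1 ⊆ X₁
    have hsub1 : partOf A hX₁.2.choose ⊆ X₁ := by
      obtain ⟨X', hX', hs⟩ := hco _ (partOf_mem hA hpt1)
      have : X' = X₁ := hA₁.pd X' hX' X₁ hX₁.1
        ⟨hX₁.2.choose, Finset.mem_inter.2 ⟨hs (mem_partOf hA hpt1), hp1.1⟩⟩
      exact this ▸ hs
    have hsub2 : partOf A hX₂.2.choose ⊆ X₂ := by
      obtain ⟨X', hX', hs⟩ := hco _ (partOf_mem hA hpt2)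
      have : X' = X₂ := hA₁.pd X' hX' X₂ hX₂.1
        ⟨hX₂.2.choose, Finset.mem_inter.2 ⟨hs (mem_partOf hA hpt2), hp2.1⟩⟩
      exact this ▸ hs
    have hp1mem : hX₁.2.choose ∈ partOf A hX₂.2.choose := by
      rw [← hEq]; exact mem_partOf hA hpt1
    exact hA₁.pd X₁ hX₁.1 X₂ hX₂.1
      ⟨hX₁.2.choose, Finset.mem_inter.2 ⟨hp1.1, hsub2 hp1mem⟩⟩

variable [DecidableRel G.Adj]

lemma process {t : Finset V} (l : List (Finset V)) :
    ∀ (A : Finset (Finset V)), Partn t A → (∀ X ∈ A, Conn G X) →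
    (∀ Y ∈ l, Y ⊆ t ∧ Y.Nonempty ∧ Conn G Y) →
    ∃ Af : Finset (Finset V), Partn t Af ∧ (∀ X ∈ Af, Conn G X) ∧
      (∀ X₀ ∈ A, ∃ X ∈ Af, X₀ ⊆ X) ∧
      (∀ Y ∈ l, ∃ X ∈ Af, Y ⊆ X) ∧
      insideEdges G A ⊆ insideEdges G Af ∧
      A.card + l.length ≤ Af.card + (l.map (nmeets A)).sum := by
  classical
  induction l with
  | nil =>
    intro A hA hAc _
    exact ⟨A, hA, hAc, fun X hX => ⟨X, hX, Finset.Subset.refl X⟩, by simp,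
      Finset.Subset.refl _, by simp⟩
  | cons Y l' ih =>
    intro A hA hAc hl
    obtain ⟨hYt, hYne, hYc⟩ := hl Y List.mem_cons_self
    set M : Finset (Finset V) := A.filter (fun X => (X ∩ Y).Nonempty) with hM
    have h1 : M ⊆ A := Finset.filter_subset _ _
    have h2 : M.Nonempty := by
      obtain ⟨y, hy⟩ := hYne
      obtain ⟨X, hX, hyX⟩ := hA.cover y (hYt hy)
      exact ⟨X, Finset.mem_filter.2 ⟨hX, ⟨y, Finset.mem_inter.2 ⟨hyX, hy⟩⟩⟩⟩
    set Z := M.sup id with hZ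
    set A₁ := (A \ M) ∪ {Z} with hA₁def
    have hA₁ : Partn t A₁ := merge_partn hA h1 h2
    have hYZ : Y ⊆ Z := by
      intro y hy
      obtain ⟨X, hX, hyX⟩ := hA.cover y (hYt hy)
      exact Finset.mem_sup.2 ⟨X, Finset.mem_filter.2 ⟨hX, ⟨y, Finset.mem_inter.2
        ⟨hyX, hy⟩⟩⟩, hyX⟩
    have hZconn : Conn G Z := by
      have := conn_union_family hYc M (fun X hX => ⟨hAc X (h1 hX),
        (Finset.mem_filter.1 hX).2⟩)
      rwa [Finset.union_eq_right.2 hYZ] at this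
    have hA₁c : ∀ X ∈ A₁, Conn G X := by
      intro X hX
      rcases Finset.mem_union.1 hX with h | h
      · exact hAc X (Finset.mem_sdiff.1 h).1
      · rw [Finset.mem_singleton.1 h]; exact hZconn
    have hco1 : ∀ X₀ ∈ A, ∃ X ∈ A₁, X₀ ⊆ X := by
      intro X₀ hX₀
      by_cases h : X₀ ∈ M
      · exact ⟨Z, Finset.mem_union_right _ (by simp), Finset.le_sup (f := id) h⟩
      · exact ⟨X₀, Finset.mem_union_left _ (Finset.mem_sdiff.2 ⟨hX₀, h⟩),
          Finset.Subset.refl _⟩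
    obtain ⟨Af, hAf, hAfc, hcof, hYf, hif, hcardf⟩ := ih A₁ hA₁ hA₁c
      (fun Y' hY' => hl Y' (List.mem_cons_of_mem _ hY'))
    refine ⟨Af, hAf, hAfc, ?_, ?_, ?_, ?_⟩
    · intro X₀ hX₀
      obtain ⟨X₁, hX₁, hs1⟩ := hco1 X₀ hX₀
      obtain ⟨X, hX, hs⟩ := hcof X₁ hX₁
      exact ⟨X, hX, hs1.trans hs⟩
    · intro Y'' hY''
      rcases List.mem_cons.1 hY'' with rfl | h
      · obtain ⟨X, hX, hs⟩ := hcof Z (Finset.mem_union_right _ (by simp))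
        exact ⟨X, hX, hYZ.trans hs⟩
      · exact hYf Y'' h
    · exact le_trans (by rw [merge_inside hA h1]; exact Finset.subset_union_left) hif
    · have hcard : A₁.card + M.card = A.card + 1 := merge_card hA h1 h2
      have hnm : nmeets A Y = M.card := by rw [nmeets, hM]
      have hmono : ((l'.map (nmeets A₁)).sum ≤ (l'.map (nmeets A)).sum) :=
        List.sum_le_sum (fun Y' _ => nmeets_mono hA hA₁ hco1 Y')
      simp only [List.map_cons, List.sum_cons, List.length_cons]
      omega

end OCA
namespace OCA

variable {G : SimpleGraph V} [DecidableRel G.Adj]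

lemma crossEdges_mono {𝒜 ℬ : Finset (Finset V)} (h : 𝒜 ⊆ ℬ) :
    crossEdges G 𝒜 ⊆ crossEdges G ℬ := by
  intro e he
  rw [crossEdges, Finset.mem_filter] at he ⊢
  obtain ⟨hge, X, hX, Y, hY, hXY, i, j, rfl, hi, hj⟩ := he
  exact ⟨hge, X, h hX, Y, h hY, hXY, i, j, rfl, hi, hj⟩

lemma adj_of_cross {e : Sym2 V} {i j : V} (he : e ∈ G.edgeFinset) (hij : e = s(i, j)) :
    G.Adj i j := by
  subst hij
  exact SimpleGraph.mem_edgeFinset.1 he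

/-- Connectivity of the merged class `⋃ 𝒲`. -/
lemma sup_W_conn (w : Sym2 V → ℝ) (hw : ∀ e, 0 ≤ w e) {U : Finset V} {u : V}
    (hu : u ∉ U) {Pp : Finset (Finset V)} (hPp : Partn U Pp)
    (hPc : ∀ X ∈ Pp, Conn G X)
    (hPopt : ∀ A : Finset (Finset V), Partn U A → (∀ X ∈ A, Conn G X) →
      partitionValue G w A ≤ partitionValue G w Pp)
    {𝒲 : Finset (Finset V)} (h𝒲 : 𝒲 ⊆ insert {u} Pp)
    (hu𝒲 : ({u} : Finset V) ∈ 𝒲)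
    (hmin : ∀ 𝒲' ⊆ insert {u} Pp, ({u} : Finset V) ∈ 𝒲' →
      (𝒲.card : ℝ) - 1 - ∑ e ∈ crossEdges G 𝒲, w e ≤
        (𝒲'.card : ℝ) - 1 - ∑ e ∈ crossEdges G 𝒲', w e) :
    Conn G (𝒲.sup id) := by
  classical
  set S := 𝒲.sup id with hS
  have hB : Partn (insert u U) (insert {u} Pp) := insert_singleton_partn hPp hu
  have hconn𝒲 : ∀ X ∈ 𝒲, Conn G X := by
    intro X hX
    rcases Finset.mem_insert.1 (h𝒲 hX) with rfl | h
    · exact conn_singleton u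
    · exact hPc X h
  have huS : u ∈ S := Finset.mem_sup.2 ⟨{u}, hu𝒲, by simp⟩
  set 𝒲₁ := 𝒲.filter (fun X => ∃ x ∈ X, ReachIn G S u x) with h𝒲₁
  set 𝒲₂ := 𝒲 \ 𝒲₁ with h𝒲₂
  have h𝒲₁u : ({u} : Finset V) ∈ 𝒲₁ :=
    Finset.mem_filter.2 ⟨hu𝒲, u, by simp, ReachIn.refl u huS⟩
  have hreach : ∀ X ∈ 𝒲₁, ∀ x ∈ X, ReachIn G S u x := by
    intro X hX x hx
    rw [h𝒲₁, Finset.mem_filter] at hX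
    obtain ⟨hX𝒲, x₀, hx₀, hr⟩ := hX
    exact hr.trans ((hconn𝒲 X hX𝒲 x₀ hx₀ x hx).mono (Finset.le_sup (f := id) hX𝒲))
  by_cases hcase : 𝒲₂ = ∅
  · -- all of 𝒲 is reachable from u: S is connected
    have h12 : 𝒲₁ = 𝒲 := by
      rw [h𝒲₂] at hcase
      have := Finset.sdiff_eq_empty_iff_subset.1 hcase
      exact Finset.Subset.antisymm (Finset.filter_subset _ _) this
    intro x hx y hy
    obtain ⟨X, hX, hxX⟩ := Finset.mem_sup.1 hx
    obtain ⟨Y, hY, hyY⟩ := Finset.mem_sup.1 hy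
    have h1 : ReachIn G S u x := hreach X (h12 ▸ hX) x hxX
    have h2 : ReachIn G S u y := hreach Y (h12 ▸ hY) y hyY
    exact h1.symm.trans h2
  exfalso
  have h𝒲₂ne : 𝒲₂.Nonempty := Finset.nonempty_iff_ne_empty.2 hcase
  have hnoedge : ∀ {i j : V} {X Y : Finset V}, X ∈ 𝒲₁ → Y ∈ 𝒲₂ → i ∈ X → j ∈ Y →
      G.Adj i j → False := by
    intro i j X Y hX hY hi hj hadj
    have hY𝒲 : Y ∈ 𝒲 := (Finset.mem_sdiff.1 hY).1
    have hjS : j ∈ S := Finset.mem_sup.2 ⟨Y, hY𝒲, hj⟩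
    have : ReachIn G S u j := (hreach X hX i hi).tail hadj hjS
    exact (Finset.mem_sdiff.1 hY).2 (Finset.mem_filter.2 ⟨hY𝒲, j, hj, this⟩)
  have hmemdisj : ∀ {X Y : Finset V}, X ∈ 𝒲₁ → Y ∈ 𝒲₂ → (X ∩ Y).Nonempty → False := by
    intro X Y hX hY hne
    have hX𝒲 : X ∈ 𝒲 := (Finset.filter_subset _ _) hX
    have hY𝒲 : Y ∈ 𝒲 := (Finset.mem_sdiff.1 hY).1
    have := hB.pd X (h𝒲 hX𝒲) Y (h𝒲 hY𝒲) hne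
    subst this
    exact (Finset.mem_sdiff.1 hY).2 hX
  have hsplit : crossEdges G 𝒲 = crossEdges G 𝒲₁ ∪ crossEdges G 𝒲₂ := by
    apply Finset.Subset.antisymm
    · intro e he
      rw [crossEdges, Finset.mem_filter] at he
      obtain ⟨hge, X, hX, Y, hY, hXY, i, j, hij, hi, hj⟩ := he
      have hadj := adj_of_cross hge hij
      have hX12 : X ∈ 𝒲₁ ∨ X ∈ 𝒲₂ := by
        by_cases h : X ∈ 𝒲₁
        · exact Or.inl h
        · exact Or.inr (Finset.mem_sdiff.2 ⟨hX, h⟩)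
      have hY12 : Y ∈ 𝒲₁ ∨ Y ∈ 𝒲₂ := by
        by_cases h : Y ∈ 𝒲₁
        · exact Or.inl h
        · exact Or.inr (Finset.mem_sdiff.2 ⟨hY, h⟩)
      rcases hX12 with h1 | h1 <;> rcases hY12 with h2 | h2
      · exact Finset.mem_union_left _ (Finset.mem_filter.2
          ⟨hge, X, h1, Y, h2, hXY, i, j, hij, hi, hj⟩)
      · exact absurd hadj (fun h => hnoedge h1 h2 hi hj h)
      · exact absurd hadj.symm (fun h => hnoedge h2 h1 hj hi h)
      · exact Finset.mem_union_right _ (Finset.mem_filter.2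
          ⟨hge, X, h1, Y, h2, hXY, i, j, hij, hi, hj⟩)
    · exact Finset.union_subset (crossEdges_mono (Finset.filter_subset _ _))
        (crossEdges_mono (Finset.sdiff_subset))
  have hdisj12 : Disjoint (crossEdges G 𝒲₁) (crossEdges G 𝒲₂) := by
    rw [Finset.disjoint_left]
    intro e he1 he2
    rw [crossEdges, Finset.mem_filter] at he1 he2
    obtain ⟨_, X, hX, Y, hY, hXY, i, j, hij, hi, hj⟩ := he1
    obtain ⟨_, X', hX', Y', hY', hXY', i', j', hij', hi', hj'⟩ := he2
    rw [hij, Sym2.eq_iff] at hij'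
    rcases hij' with ⟨rfl, rfl⟩ | ⟨rfl, rfl⟩
    · exact hmemdisj hX hX' ⟨i, Finset.mem_inter.2 ⟨hi, hi'⟩⟩
    · exact hmemdisj hX hY' ⟨i, Finset.mem_inter.2 ⟨hi, hj'⟩⟩
  have hcard12 : 𝒲₁.card + 𝒲₂.card = 𝒲.card := by
    have hsub' : 𝒲₁ ⊆ 𝒲 := Finset.filter_subset _ _
    have h2c : 𝒲₂.card = 𝒲.card - 𝒲₁.card := by rw [h𝒲₂, Finset.card_sdiff_of_subset hsub']
    have := Finset.card_le_card hsub'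
    omega
  -- apply minimality to 𝒲₁
  have hmin1 := hmin 𝒲₁ (fun X hX => h𝒲 ((Finset.filter_subset _ _) hX)) h𝒲₁u
  have hsum : ∑ e ∈ crossEdges G 𝒲, w e =
      (∑ e ∈ crossEdges G 𝒲₁, w e) + ∑ e ∈ crossEdges G 𝒲₂, w e := by
    rw [hsplit, Finset.sum_union hdisj12]
  have hkey : (𝒲₂.card : ℝ) ≤ ∑ e ∈ crossEdges G 𝒲₂, w e := by
    have hc : (𝒲₁.card : ℝ) + 𝒲₂.card = 𝒲.card := by exact_mod_cast hcard12
    rw [hsum] at hmin1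
    linarith
  -- now build the contradicting partition of U
  have h𝒲₂P : 𝒲₂ ⊆ Pp := by
    intro X hX
    rcases Finset.mem_insert.1 (h𝒲 ((Finset.mem_sdiff.1 hX).1)) with rfl | h
    · exact absurd h𝒲₁u (fun h => (Finset.mem_sdiff.1 hX).2 h)
    · exact h
  set S₂ := 𝒲₂.sup id with hS₂
  have hS₂U : S₂ ⊆ U := Finset.sup_le (fun X hX => hPp.sub X (h𝒲₂P hX))
  have hS₂ne : S₂.Nonempty := sup_nonempty_of_mem h𝒲₂P h𝒲₂ne hPp
  set comps := compPartition G S₂ with hcomps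
  have hcompsP := compPartition_partn (G := G) S₂
  set Pstar := (Pp \ 𝒲₂) ∪ comps with hPstar
  have hmixed : ∀ {C X : Finset V}, C ∈ comps → X ∈ Pp \ 𝒲₂ → (C ∩ X).Nonempty → False := by
    intro C X hC hX hne
    obtain ⟨z, hz⟩ := hne
    rw [Finset.mem_inter] at hz
    obtain ⟨Y, hY, hzY⟩ := Finset.mem_sup.1 (hcompsP.sub C hC hz.1)
    have := hPp.pd X (Finset.mem_sdiff.1 hX).1 Y (h𝒲₂P hY)
      ⟨z, Finset.mem_inter.2 ⟨hz.2, hzY⟩⟩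
    exact (Finset.mem_sdiff.1 hX).2 (this ▸ hY)
  have hPstarP : Partn U Pstar := by
    constructor
    · intro X hX Y hY hne
      rcases Finset.mem_union.1 hX with h1 | h1 <;> rcases Finset.mem_union.1 hY with h2 | h2
      · exact hPp.pd X (Finset.mem_sdiff.1 h1).1 Y (Finset.mem_sdiff.1 h2).1 hne
      · exact absurd hne (fun h => hmixed h2 h1 (by rwa [Finset.inter_comm]))
      · exact absurd hne (fun h => hmixed h1 h2 h)
      · exact hcompsP.pd X h1 Y h2 hne
    · intro X hX
      rcases Finset.mem_union.1 hX with h1 | h1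
      · exact hPp.sub X (Finset.mem_sdiff.1 h1).1
      · exact (hcompsP.sub X h1).trans hS₂U
    · intro v hv
      obtain ⟨X, hX, hvX⟩ := hPp.cover v hv
      by_cases h : X ∈ 𝒲₂
      · have hvS₂ : v ∈ S₂ := Finset.mem_sup.2 ⟨X, h, hvX⟩
        obtain ⟨C, hC, hvC⟩ := hcompsP.cover v hvS₂
        exact ⟨C, Finset.mem_union_right _ hC, hvC⟩
      · exact ⟨X, Finset.mem_union_left _ (Finset.mem_sdiff.2 ⟨hX, h⟩), hvX⟩
    · intro X hX
      rcases Finset.mem_union.1 hX with h1 | h1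
      · exact hPp.ne X (Finset.mem_sdiff.1 h1).1
      · exact hcompsP.ne X h1
  have hPstarC : ∀ X ∈ Pstar, Conn G X := by
    intro X hX
    rcases Finset.mem_union.1 hX with h1 | h1
    · exact hPc X (Finset.mem_sdiff.1 h1).1
    · exact compPartition_conn S₂ X h1
  -- cardinality of Pstar
  have hdisjfam : Disjoint (Pp \ 𝒲₂) comps := by
    rw [Finset.disjoint_right]
    intro C hC hC'
    obtain ⟨z, hz⟩ := hcompsP.ne C hC
    exact hmixed hC hC' ⟨z, Finset.mem_inter.2 ⟨hz, hz⟩⟩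
  have hcardstar : Pstar.card = Pp.card - 𝒲₂.card + comps.card := by
    rw [hPstar, Finset.card_union_of_disjoint hdisjfam,
      Finset.card_sdiff_of_subset (h𝒲₂P)]
  have hcompsne : 1 ≤ comps.card := by
    obtain ⟨v, hv⟩ := hS₂ne
    exact Finset.card_pos.2 ⟨reachClass G S₂ v, Finset.mem_image_of_mem _ hv⟩
  -- inside edges of Pstar
  have hinsub : insideEdges G Pp ∪ crossEdges G 𝒲₂ ⊆ insideEdges G Pstar := by
    apply Finset.union_subset
    · intro e he
      rw [insideEdges, Finset.mem_filter] at he ⊢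
      obtain ⟨hge, X, hX, hin⟩ := he
      refine ⟨hge, ?_⟩
      by_cases h : X ∈ 𝒲₂
      · obtain ⟨x₀, hx₀⟩ := hPp.ne X (h𝒲₂P h)
        have hXsub : X ⊆ reachClass G S₂ x₀ := by
          intro y hy
          have hXconn := hconn𝒲 X (Finset.mem_sdiff.1 h).1
          exact mem_reachClass.2 ⟨Finset.mem_sup.2 ⟨X, h, hy⟩,
            (hXconn x₀ hx₀ y hy).mono (Finset.le_sup (f := id) h)⟩
        exact ⟨reachClass G S₂ x₀, Finset.mem_union_right _
          (Finset.mem_image_of_mem _ (Finset.mem_sup.2 ⟨X, h, hx₀⟩)),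
          fun v hv => hXsub (hin v hv)⟩
      · exact ⟨X, Finset.mem_union_left _ (Finset.mem_sdiff.2 ⟨hX, h⟩), hin⟩
    · intro e he
      rw [crossEdges, Finset.mem_filter] at he
      obtain ⟨hge, X, hX, Y, hY, hXY, i, j, hij, hi, hj⟩ := he
      have hadj := adj_of_cross hge hij
      have hiS : i ∈ S₂ := Finset.mem_sup.2 ⟨X, hX, hi⟩
      have hjS : j ∈ S₂ := Finset.mem_sup.2 ⟨Y, hY, hj⟩
      rw [insideEdges, Finset.mem_filter]
      refine ⟨hge, reachClass G S₂ i, Finset.mem_union_right _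
        (Finset.mem_image_of_mem _ hiS), ?_⟩
      intro v hv
      rw [hij] at hv
      rcases Sym2.mem_iff.1 hv with rfl | rfl
      · exact mem_reachClass_self hiS
      · exact mem_reachClass.2 ⟨hjS, (ReachIn.refl i hiS).tail hadj hjS⟩
  have hdisjedge : Disjoint (insideEdges G Pp) (crossEdges G 𝒲₂) :=
    cross_disjoint_inside hPp h𝒲₂P
  -- value comparison
  have hval : partitionValue G w Pp + 1 ≤ partitionValue G w Pstar := by
    have hs1 : ∑ e ∈ insideEdges G Pp ∪ crossEdges G 𝒲₂, w e ≤
        ∑ e ∈ insideEdges G Pstar, w e :=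
      Finset.sum_le_sum_of_subset_of_nonneg hinsub (fun e _ _ => hw e)
    rw [Finset.sum_union hdisjedge] at hs1
    have hc : (Pstar.card : ℝ) = (Pp.card : ℝ) - 𝒲₂.card + comps.card := by
      have h1 : 𝒲₂.card ≤ Pp.card := Finset.card_le_card h𝒲₂P
      rw [hcardstar]
      push_cast [Nat.cast_sub h1]
      ring
    have hcc : (1 : ℝ) ≤ comps.card := by exact_mod_cast hcompsne
    show (partitionValue G w Pp) + 1 ≤ (Pstar.card : ℝ) + ∑ e ∈ insideEdges G Pstar, w e
    show ((Pp.card : ℝ) + ∑ e ∈ insideEdges G Pp, w e) + 1 ≤ _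
    rw [hc]
    linarith
  have := hPopt Pstar hPstarP hPstarC
  linarith

end OCA
open OCA in
/-- One-step correctness of the Optimal Cooperation Algorithm: let `G` have nonnegative
edge weights, `U ⊆ V`, `u ∉ U`, and let `P` be a Potts partition of the induced subgraph
`G(U)` maximizing `f` over Potts partitions of `G(U)`.  If `𝒲 ⊆ P ∪ {{u}}` contains
`{u}` and minimizes `|𝒲| - 1 - w(E(𝒲))` over all subsets of `P ∪ {{u}}` containing
`{u}`, then the partition `(P \ 𝒲) ∪ {∪_{X ∈ 𝒲} X}` of `U ∪ {u}` maximizes `f` over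
Potts partitions of `G(U ∪ {u})`. -/
theorem optimal_cooperation_step (G : SimpleGraph V) [DecidableRel G.Adj]
    (w : Sym2 V → ℝ) (hw : ∀ e, 0 ≤ w e)
    (U : Finset V) (u : V) (hu : u ∉ U)
    (P : Finpartition U) (hP : IsPotts G P.parts)
    (hPopt : ∀ Q : Finpartition U, IsPotts G Q.parts →
      partitionValue G w Q.parts ≤ partitionValue G w P.parts)
    (𝒲 : Finset (Finset V)) (h𝒲 : 𝒲 ⊆ insert {u} P.parts)
    (hu𝒲 : ({u} : Finset V) ∈ 𝒲)
    (hmin : ∀ 𝒲' ⊆ insert {u} P.parts, ({u} : Finset V) ∈ 𝒲' →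
      (𝒲.card : ℝ) - 1 - ∑ e ∈ crossEdges G 𝒲, w e ≤
        (𝒲'.card : ℝ) - 1 - ∑ e ∈ crossEdges G 𝒲', w e) :
    ∃ Pnew : Finpartition (insert u U),
      Pnew.parts = ((insert {u} P.parts) \ 𝒲) ∪ {𝒲.sup id} ∧
      IsPotts G Pnew.parts ∧
      ∀ Q : Finpartition (insert u U), IsPotts G Q.parts →
        partitionValue G w Q.parts ≤ partitionValue G w Pnew.parts := by
  classical
  have hPp : Partn U P.parts := Finpartition.toPartn P
  have hPc : ∀ X ∈ P.parts, Conn G X := fun X hX => connected_to_conn (hP X hX)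
  have hPoptP : ∀ A : Finset (Finset V), Partn U A → (∀ X ∈ A, Conn G X) →
      partitionValue G w A ≤ partitionValue G w P.parts := by
    intro A hA hAc
    exact hPopt hA.toFinpartition (fun X hX => conn_to_connected (hA.ne X hX) (hAc X hX))
  set B : Finset (Finset V) := insert {u} P.parts with hBdef
  have hB : Partn (insert u U) B := insert_singleton_partn hPp hu
  have hBc : ∀ X ∈ B, Conn G X := by
    intro X hX
    rcases Finset.mem_insert.1 hX with rfl | h
    · exact conn_singleton u
    · exact hPc X h
  have huP : ({u} : Finset V) ∉ P.parts := singleton_notmem hPp hu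
  have hvalB : partitionValue G w B = partitionValue G w P.parts + 1 :=
    value_insert_singleton w huP
  -- build Pnew
  have hZconn : Conn G (𝒲.sup id) := sup_W_conn w hw hu hPp hPc hPoptP h𝒲 hu𝒲 hmin
  have h𝒲ne : 𝒲.Nonempty := ⟨{u}, hu𝒲⟩
  have hPnewP : Partn (insert u U) ((B \ 𝒲) ∪ {𝒲.sup id}) := merge_partn hB h𝒲 h𝒲ne
  have hPnewC : ∀ X ∈ (B \ 𝒲) ∪ {𝒲.sup id}, Conn G X := by
    intro X hX
    rcases Finset.mem_union.1 hX with h | h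
    · exact hBc X (Finset.mem_sdiff.1 h).1
    · rw [Finset.mem_singleton.1 h]; exact hZconn
  have hvalPnew : partitionValue G w ((B \ 𝒲) ∪ {𝒲.sup id}) =
      partitionValue G w B + 1 - 𝒲.card + ∑ e ∈ crossEdges G 𝒲, w e :=
    merge_value w hB h𝒲 h𝒲ne
  refine ⟨hPnewP.toFinpartition, rfl, ?_, ?_⟩
  · intro X hX
    exact conn_to_connected (hPnewP.ne X hX) (hPnewC X hX)
  -- optimality
  intro Q hQPotts
  show partitionValue G w Q.parts ≤ partitionValue G w ((B \ 𝒲) ∪ {𝒲.sup id})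
  set A : Finset (Finset V) := Q.parts with hAdef
  have hQp : Partn (insert u U) A := Finpartition.toPartn Q
  have hQc : ∀ X ∈ A, Conn G X := fun X hX => connected_to_conn (hQPotts X hX)
  -- the meet
  set MT := meetParts G (insert u U) A B with hMTdef
  have hMT : Partn (insert u U) MT := meetParts_partn hQp hB
  have hMTc : ∀ X ∈ MT, Conn G X := meetParts_conn hQp hB
  have hus : u ∈ insert u U := Finset.mem_insert_self u U
  have huB : ({u} : Finset V) ∈ B := Finset.mem_insert_self _ _
  have huMT : ({u} : Finset V) ∈ MT := by
    have := meetCls_singleton (G := G) hQp hB hus huB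
    rw [hMTdef, meetParts]
    exact this ▸ Finset.mem_image_of_mem _ hus
  have hR : Partn U (MT.erase {u}) := erase_singleton_partn hMT hu huMT
  have hRc : ∀ X ∈ MT.erase {u}, Conn G X :=
    fun X hX => hMTc X (Finset.mem_of_mem_erase hX)
  have hvalMT : partitionValue G w MT = partitionValue G w (MT.erase {u}) + 1 :=
    value_erase_singleton w huMT
  have hMTle : partitionValue G w MT ≤ partitionValue G w P.parts + 1 := by
    have := hPoptP _ hR hRc
    linarith
  -- the join process
  have hl : ∀ Y ∈ B.toList, Y ⊆ insert u U ∧ Y.Nonempty ∧ Conn G Y := by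
    intro Y hY
    rw [Finset.mem_toList] at hY
    exact ⟨hB.sub Y hY, hB.ne Y hY, hBc Y hY⟩
  obtain ⟨Af, hAf, hAfc, hco, hYsub, hinsub, hcardN⟩ := process B.toList A hQp hQc hl
  have hYsub' : ∀ Y ∈ B, ∃ X ∈ Af, Y ⊆ X := by
    intro Y hY
    exact hYsub Y (Finset.mem_toList.2 hY)
  -- counting
  have hsum_toList : ((B.toList.map (nmeets A)).sum : ℕ) = ∑ Y ∈ B, nmeets A Y :=
    Finset.sum_map_toList B (nmeets A)
  have hcount : A.card + B.card ≤ Af.card + MT.card := by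
    have h1 : ∑ Y ∈ B, nmeets A Y ≤ MT.card := by
      rw [hMTdef]
      exact meet_count (G := G) hQp hB
    rw [Finset.length_toList] at hcardN
    omega
  -- edge sums
  have hinB : insideEdges G B ⊆ insideEdges G Af := by
    intro e he
    rw [insideEdges, Finset.mem_filter] at he ⊢
    obtain ⟨hge, Y, hY, hin⟩ := he
    obtain ⟨X, hX, hs⟩ := hYsub' Y hY
    exact ⟨hge, X, hX, fun v hv => hs (hin v hv)⟩
  have hsums : ∑ e ∈ insideEdges G A, w e + ∑ e ∈ insideEdges G B, w e ≤
      ∑ e ∈ insideEdges G Af, w e + ∑ e ∈ insideEdges G MT, w e := by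
    have h1 : ∑ e ∈ insideEdges G A ∪ insideEdges G B, w e +
        ∑ e ∈ insideEdges G A ∩ insideEdges G B, w e =
        ∑ e ∈ insideEdges G A, w e + ∑ e ∈ insideEdges G B, w e :=
      Finset.sum_union_inter
    have h2 : ∑ e ∈ insideEdges G A ∪ insideEdges G B, w e ≤
        ∑ e ∈ insideEdges G Af, w e :=
      Finset.sum_le_sum_of_subset_of_nonneg (Finset.union_subset hinsub hinB)
        (fun e _ _ => hw e)
    have h3 : ∑ e ∈ insideEdges G A ∩ insideEdges G B, w e ≤
        ∑ e ∈ insideEdges G MT, w e :=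
      Finset.sum_le_sum_of_subset_of_nonneg (inside_inter_subset_meet hQp hB)
        (fun e _ _ => hw e)
    linarith
  have hf1 : partitionValue G w A + partitionValue G w B ≤
      partitionValue G w Af + partitionValue G w MT := by
    have hc : (A.card : ℝ) + B.card ≤ (Af.card : ℝ) + MT.card := by exact_mod_cast hcount
    show ((A.card : ℝ) + ∑ e ∈ insideEdges G A, w e) +
      ((B.card : ℝ) + ∑ e ∈ insideEdges G B, w e) ≤
      ((Af.card : ℝ) + ∑ e ∈ insideEdges G Af, w e) +
      ((MT.card : ℝ) + ∑ e ∈ insideEdges G MT, w e)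
    linarith
  -- decompose Af at the class of u
  set Zu := partOf Af u with hZudef
  have hZuAf : Zu ∈ Af := partOf_mem hAf hus
  have huZu : u ∈ Zu := mem_partOf hAf hus
  set 𝒲' := B.filter (· ⊆ Zu) with h𝒲'def
  have h𝒲'B : 𝒲' ⊆ B := Finset.filter_subset _ _
  have hu𝒲' : ({u} : Finset V) ∈ 𝒲' := by
    obtain ⟨X, hX, hs⟩ := hYsub' {u} huB
    have : X = Zu := hAf.pd X hX Zu hZuAf
      ⟨u, Finset.mem_inter.2 ⟨hs (by simp), huZu⟩⟩
    exact Finset.mem_filter.2 ⟨huB, this ▸ hs⟩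
  have h𝒲'ne : 𝒲'.Nonempty := ⟨{u}, hu𝒲'⟩
  have h𝒲'sup : 𝒲'.sup id = Zu := by
    apply Finset.Subset.antisymm
    · intro v hv
      obtain ⟨Y, hY, hvY⟩ := Finset.mem_sup.1 hv
      exact (Finset.mem_filter.1 hY).2 hvY
    · intro v hv
      have hvs : v ∈ insert u U := hAf.sub Zu hZuAf hv
      obtain ⟨Y, hY, hs⟩ := hYsub' (partOf B v) (partOf_mem hB hvs)
      have : Y = Zu := hAf.pd Y hY Zu hZuAf
        ⟨v, Finset.mem_inter.2 ⟨hs (mem_partOf hB hvs), hv⟩⟩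
      exact Finset.mem_sup.2 ⟨partOf B v, Finset.mem_filter.2
        ⟨partOf_mem hB hvs, this ▸ hs⟩, mem_partOf hB hvs⟩
  set Ps' := (Af \ {Zu}) ∪ 𝒲' with hPs'def
  have hmixed : ∀ {X Y : Finset V}, X ∈ Af \ {Zu} → Y ∈ 𝒲' → (X ∩ Y).Nonempty → False := by
    intro X Y hX hY hne
    rw [Finset.mem_sdiff, Finset.mem_singleton] at hX
    obtain ⟨z, hz⟩ := hne
    rw [Finset.mem_inter] at hz
    have hYZ : Y ⊆ Zu := (Finset.mem_filter.1 hY).2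
    exact hX.2 (hAf.pd X hX.1 Zu hZuAf ⟨z, Finset.mem_inter.2 ⟨hz.1, hYZ hz.2⟩⟩)
  have hPs' : Partn (insert u U) Ps' := by
    constructor
    · intro X hX Y hY hne
      rcases Finset.mem_union.1 hX with h1 | h1 <;> rcases Finset.mem_union.1 hY with h2 | h2
      · exact hAf.pd X (Finset.mem_sdiff.1 h1).1 Y (Finset.mem_sdiff.1 h2).1 hne
      · exact absurd hne (fun h => hmixed h1 h2 h)
      · exact absurd hne (fun h => hmixed h2 h1 (by rwa [Finset.inter_comm]))
      · exact hB.pd X (h𝒲'B h1) Y (h𝒲'B h2) hne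
    · intro X hX
      rcases Finset.mem_union.1 hX with h1 | h1
      · exact hAf.sub X (Finset.mem_sdiff.1 h1).1
      · exact hB.sub X (h𝒲'B h1)
    · intro v hv
      by_cases h : v ∈ Zu
      · rw [← h𝒲'sup] at h
        obtain ⟨Y, hY, hvY⟩ := Finset.mem_sup.1 h
        exact ⟨Y, Finset.mem_union_right _ hY, hvY⟩
      · obtain ⟨X, hX, hvX⟩ := hAf.cover v hv
        refine ⟨X, Finset.mem_union_left _ (Finset.mem_sdiff.2 ⟨hX, ?_⟩), hvX⟩
        rw [Finset.mem_singleton]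
        rintro rfl
        exact h hvX
    · intro X hX
      rcases Finset.mem_union.1 hX with h1 | h1
      · exact hAf.ne X (Finset.mem_sdiff.1 h1).1
      · exact hB.ne X (h𝒲'B h1)
  have hPs'c : ∀ X ∈ Ps', Conn G X := by
    intro X hX
    rcases Finset.mem_union.1 hX with h1 | h1
    · exact hAfc X (Finset.mem_sdiff.1 h1).1
    · exact hBc X (h𝒲'B h1)
  have h𝒲'Ps' : 𝒲' ⊆ Ps' := fun Y hY => Finset.mem_union_right _ hY
  have hAfeq : Af = (Ps' \ 𝒲') ∪ {𝒲'.sup id} := by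
    have h1 : Ps' \ 𝒲' = Af \ {Zu} := by
      apply Finset.Subset.antisymm
      · intro X hX
        rw [Finset.mem_sdiff] at hX
        rcases Finset.mem_union.1 hX.1 with h | h
        · exact h
        · exact absurd h hX.2
      · intro X hX
        rw [Finset.mem_sdiff]
        refine ⟨Finset.mem_union_left _ hX, fun h => ?_⟩
        obtain ⟨x, hx⟩ := hAf.ne X (Finset.mem_sdiff.1 hX).1
        exact hmixed hX h ⟨x, Finset.mem_inter.2 ⟨hx, hx⟩⟩
    rw [h1, h𝒲'sup]
    apply Finset.Subset.antisymm
    · intro X hX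
      by_cases h : X = Zu
      · exact Finset.mem_union_right _ (h ▸ Finset.mem_singleton_self _)
      · exact Finset.mem_union_left _ (Finset.mem_sdiff.2 ⟨hX, by simpa using h⟩)
    · apply Finset.union_subset (Finset.sdiff_subset)
      intro X hX
      rw [Finset.mem_singleton.1 hX]
      exact hZuAf
  have hvalAf : partitionValue G w Af =
      partitionValue G w Ps' + 1 - 𝒲'.card + ∑ e ∈ crossEdges G 𝒲', w e := by
    conv_lhs => rw [hAfeq]
    exact merge_value w hPs' h𝒲'Ps' h𝒲'ne
  have huPs' : ({u} : Finset V) ∈ Ps' := h𝒲'Ps' hu𝒲'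
  have hP'' : Partn U (Ps'.erase {u}) := erase_singleton_partn hPs' hu huPs'
  have hP''c : ∀ X ∈ Ps'.erase {u}, Conn G X :=
    fun X hX => hPs'c X (Finset.mem_of_mem_erase hX)
  have hvalPs' : partitionValue G w Ps' = partitionValue G w (Ps'.erase {u}) + 1 :=
    value_erase_singleton w huPs'
  have hP''le : partitionValue G w (Ps'.erase {u}) ≤ partitionValue G w P.parts :=
    hPoptP _ hP'' hP''c
  have hmin' := hmin 𝒲' h𝒲'B hu𝒲'
  linarith
end
end
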